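/- arXiv:1006.5223 — 8 statements merged into one kernel-verified Lean document; each statement's English description precedes it below -/
import Mathlib

section
/- Let (x,y,z) ∈ ℝ³. There exist g, h ∈ SL(2,ℝ) with (Tr g, Tr h, Tr (g·h)) = (x,y,z) if and only if x² + y² + z² − xyz − 2 ≥ 2, or at least one of |x|, |y|, |z| is ≥ 2. -/
/-- The trace of an element of SL(2,ℝ), viewed as a 2×2 real matrix. -/
def trSL (g : Matrix.SpecialLinearGroup (Fin 2) ℝ) : ℝ :=
  Matrix.trace (g : Matrix (Fin 2) (Fin 2) ℝ)

namespace Stmt0Aux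

open Matrix

/-- Build an element of SL(2,ℝ) from entries. -/
def mkSL (a b c d : ℝ) (h : a * d - b * c = 1) : Matrix.SpecialLinearGroup (Fin 2) ℝ :=
  ⟨!![a, b; c, d], by rw [Matrix.det_fin_two_of]; exact h⟩

lemma trSL_mkSL (a b c d : ℝ) (h : a * d - b * c = 1) : trSL (mkSL a b c d h) = a + d := by
  simp [trSL, mkSL, Matrix.trace_fin_two_of]

lemma trSL_mul_mkSL (a b c d p q r u : ℝ) (h1 : a * d - b * c = 1) (h2 : p * u - q * r = 1) :
    trSL (mkSL a b c d h1 * mkSL p q r u h2) = (a * p + b * r) + (c * q + d * u) := by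
  rw [trSL, Matrix.SpecialLinearGroup.coe_mul]
  simp [trSL, mkSL, Matrix.SpecialLinearGroup.coe_mul, Matrix.mul_fin_two,
    Matrix.trace_fin_two_of]

lemma trSL_inv (g : Matrix.SpecialLinearGroup (Fin 2) ℝ) : trSL g⁻¹ = trSL g := by
  rw [trSL, trSL, Matrix.SpecialLinearGroup.coe_inv, Matrix.adjugate_fin_two,
    Matrix.trace_fin_two_of, Matrix.trace_fin_two]
  ring

lemma trSL_mul_comm (g h : Matrix.SpecialLinearGroup (Fin 2) ℝ) :
    trSL (g * h) = trSL (h * g) := by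
  rw [trSL, trSL, Matrix.SpecialLinearGroup.coe_mul, Matrix.SpecialLinearGroup.coe_mul,
    Matrix.trace_mul_comm]

/-- Construction when `|z| ≥ 2`. -/
lemma exists_of_abs_z (x y z : ℝ) (hz : |z| ≥ 2) :
    ∃ g h : Matrix.SpecialLinearGroup (Fin 2) ℝ,
      trSL g = x ∧ trSL h = y ∧ trSL (g * h) = z := by
  have hz2 : z ^ 2 - 4 ≥ 0 := by nlinarith [sq_abs z, abs_nonneg z]
  set s := Real.sqrt (z ^ 2 - 4) with hsdef
  have hs : s ^ 2 = z ^ 2 - 4 := Real.sq_sqrt hz2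
  have hdetg : x * 0 - (-1) * 1 = 1 := by ring
  have hdeth : 0 * y - ((z + s) / 2) * (-((z - s) / 2)) = 1 := by nlinarith [hs]
  refine ⟨mkSL x (-1) 1 0 hdetg, mkSL 0 ((z + s) / 2) (-((z - s) / 2)) y hdeth, ?_, ?_, ?_⟩
  · rw [trSL_mkSL]; ring
  · rw [trSL_mkSL]; ring
  · rw [trSL_mul_mkSL]; ring

/-- Construction when `|x| ≥ 2`. -/
lemma exists_of_abs_x (x y z : ℝ) (hx : |x| ≥ 2) :
    ∃ g h : Matrix.SpecialLinearGroup (Fin 2) ℝ,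
      trSL g = x ∧ trSL h = y ∧ trSL (g * h) = z := by
  obtain ⟨g', h', h1, h2, h3⟩ := exists_of_abs_z z y x hx
  refine ⟨g' * h', h'⁻¹, h3, by rw [trSL_inv]; exact h2, ?_⟩
  rw [mul_inv_cancel_right]; exact h1

/-- Construction when `x² < 4` and the Fricke discriminant is nonnegative. -/
lemma exists_of_small (x y z : ℝ) (hx : x ^ 2 < 4)
    (hk : x ^ 2 + y ^ 2 + z ^ 2 - x * y * z - 4 ≥ 0) :
    ∃ g h : Matrix.SpecialLinearGroup (Fin 2) ℝ,
      trSL g = x ∧ trSL h = y ∧ trSL (g * h) = z := by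
  have hS0 : (0 : ℝ) < 4 - x ^ 2 := by linarith
  set S := Real.sqrt (4 - x ^ 2) with hSdef
  have hS : S ^ 2 = 4 - x ^ 2 := Real.sq_sqrt hS0.le
  have hSpos : 0 < S := Real.sqrt_pos.mpr hS0
  set dp := (2 * z - x * y) / S with hdpdef
  have hdp : dp * S = 2 * z - x * y := div_mul_cancel₀ _ hSpos.ne'
  have hT0 : dp ^ 2 + y ^ 2 - 4 ≥ 0 := by
    have hnum : (2 * z - x * y) ^ 2 + (y ^ 2 - 4) * (4 - x ^ 2) =
        4 * (x ^ 2 + y ^ 2 + z ^ 2 - x * y * z - 4) := by ring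
    have hsq : dp ^ 2 * S ^ 2 = (2 * z - x * y) ^ 2 := by rw [← mul_pow, hdp]
    have hrw : dp ^ 2 + y ^ 2 - 4 =
        ((2 * z - x * y) ^ 2 + (y ^ 2 - 4) * S ^ 2) / S ^ 2 := by
      rw [eq_div_iff (by positivity : S ^ 2 ≠ 0)]
      linear_combination hsq
    rw [hrw, hS, hnum]
    positivity
  set t := Real.sqrt (dp ^ 2 + y ^ 2 - 4) with htdef
  have ht : t ^ 2 = dp ^ 2 + y ^ 2 - 4 := Real.sq_sqrt hT0
  have hdetg : (x / 2) * (x / 2) - (-(S / 2)) * (S / 2) = 1 := by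
    linear_combination hS / 4
  have hdeth : (y / 2) * (y / 2) - ((t + dp) / 2) * ((t - dp) / 2) = 1 := by
    linear_combination (-1 / 4 : ℝ) * ht
  refine ⟨mkSL (x / 2) (-(S / 2)) (S / 2) (x / 2) hdetg,
    mkSL (y / 2) ((t + dp) / 2) ((t - dp) / 2) (y / 2) hdeth, ?_, ?_, ?_⟩
  · rw [trSL_mkSL]; ring
  · rw [trSL_mkSL]; ring
  · rw [trSL_mul_mkSL]
    linear_combination hdp / 2

set_option maxHeartbeats 1600000 in
/-- The key inequality: if `|tr g| < 2` then the Fricke discriminant is nonnegative. -/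
lemma key_ineq (g h : Matrix.SpecialLinearGroup (Fin 2) ℝ)
    (hx : (trSL g) ^ 2 < 4) :
    (trSL g) ^ 2 + (trSL h) ^ 2 + (trSL (g * h)) ^ 2
      - trSL g * trSL h * trSL (g * h) - 4 ≥ 0 := by
  set a := (g : Matrix (Fin 2) (Fin 2) ℝ) 0 0 with ha
  set b := (g : Matrix (Fin 2) (Fin 2) ℝ) 0 1 with hb
  set c := (g : Matrix (Fin 2) (Fin 2) ℝ) 1 0 with hc
  set d := (g : Matrix (Fin 2) (Fin 2) ℝ) 1 1 with hd
  set p := (h : Matrix (Fin 2) (Fin 2) ℝ) 0 0 with hp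
  set q := (h : Matrix (Fin 2) (Fin 2) ℝ) 0 1 with hq
  set r := (h : Matrix (Fin 2) (Fin 2) ℝ) 1 0 with hr
  set u := (h : Matrix (Fin 2) (Fin 2) ℝ) 1 1 with hu
  have hdet1 : a * d - b * c = 1 := by
    have := g.prop
    rwa [Matrix.det_fin_two] at this
  have hdet2 : p * u - q * r = 1 := by
    have := h.prop
    rwa [Matrix.det_fin_two] at this
  have hxv : trSL g = a + d := by rw [trSL, Matrix.trace_fin_two]
  have hyv : trSL h = p + u := by rw [trSL, Matrix.trace_fin_two]
  have hzv : trSL (g * h) = (a * p + b * r) + (c * q + d * u) := by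
    rw [trSL, Matrix.SpecialLinearGroup.coe_mul, Matrix.trace_fin_two]
    simp [Matrix.mul_apply, Fin.sum_univ_two, ← ha, ← hb, ← hc, ← hd, ← hp, ← hq, ← hr, ← hu]
  rw [hxv, hyv, hzv]
  rw [hxv] at hx
  set S : ℝ := 4 - (a + d) ^ 2 with hSdef
  set T : ℝ := S + (a - d) ^ 2 with hTdef
  have hSpos : 0 < S := by simp only [hSdef]; linarith
  have hTpos : 0 < T := by
    simp only [hTdef]
    nlinarith [sq_nonneg (a - d)]
  set X : ℝ := a + d
  set Y : ℝ := p + u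
  set Z : ℝ := (a * p + b * r) + (c * q + d * u)
  have key : 4 * T * (X ^ 2 + Y ^ 2 + Z ^ 2 - X * Y * Z - 4) =
      (T * (p - u) + 2 * (a - d) * c * q + 2 * (a - d) * b * r) ^ 2
        + 4 * S * (c * q - b * r) ^ 2 := by
    simp only [hTdef, hSdef]
    linear_combination
      (64 - 64 * p * u - 16 * d ^ 2 + 16 * d ^ 2 * p * u - 32 * b * c
        - 32 * b * c * q * r + 32 * b * c * p * u - 32 * a * d + 32 * a * d * p * u
        - 16 * a ^ 2 + 16 * a ^ 2 * p * u) * hdet1 +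
      (-32 * b * c + 16 * b * c * d ^ 2 + 32 * b ^ 2 * c ^ 2 + 16 * a ^ 2 * b * c) * hdet2
  have hrhs : 0 ≤ (T * (p - u) + 2 * (a - d) * c * q + 2 * (a - d) * b * r) ^ 2
      + 4 * S * (c * q - b * r) ^ 2 := by positivity
  have h4T : 0 < 4 * T := by linarith
  have hmul : 0 ≤ 4 * T * (X ^ 2 + Y ^ 2 + Z ^ 2 - X * Y * Z - 4) := key ▸ hrhs
  nlinarith [hmul, h4T]

end Stmt0Aux

/-- For `(x,y,z) ∈ ℝ³`, there exist `g, h ∈ SL(2,ℝ)` with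
`(Tr g, Tr h, Tr (g·h)) = (x,y,z)` if and only if
`x² + y² + z² − xyz − 2 ≥ 2`, or at least one of `|x|, |y|, |z|` is `≥ 2`. -/
theorem stmt0 (x y z : ℝ) :
    (∃ g h : Matrix.SpecialLinearGroup (Fin 2) ℝ,
        trSL g = x ∧ trSL h = y ∧ trSL (g * h) = z) ↔
      (x ^ 2 + y ^ 2 + z ^ 2 - x * y * z - 2 ≥ 2 ∨ |x| ≥ 2 ∨ |y| ≥ 2 ∨ |z| ≥ 2) := by
  constructor
  · rintro ⟨g, h, hg, hh, hgh⟩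
    by_cases hx : |x| ≥ 2
    · exact Or.inr (Or.inl hx)
    · left
      push_neg at hx
      have hx2 : x ^ 2 < 4 := by nlinarith [sq_abs x, abs_nonneg x]
      have := Stmt0Aux.key_ineq g h (by rw [hg]; exact hx2)
      rw [hg, hh, hgh] at this
      linarith
  · rintro (hk | hx | hy | hz)
    · by_cases hx2 : x ^ 2 < 4
      · exact Stmt0Aux.exists_of_small x y z hx2 (by linarith)
      · push_neg at hx2
        have : |x| ≥ 2 := by nlinarith [sq_abs x, abs_nonneg x]
        exact Stmt0Aux.exists_of_abs_x x y z this
    · exact Stmt0Aux.exists_of_abs_x x y z hx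
    · obtain ⟨g, h, h1, h2, h3⟩ := Stmt0Aux.exists_of_abs_x y x z hy
      exact ⟨h, g, h2, h1, by rw [← Stmt0Aux.trSL_mul_comm]; exact h3⟩
    · exact Stmt0Aux.exists_of_abs_z x y z hz
end

section
/- Let g, h ∈ SL(2,ℝ). Then Tr(g·h·g⁻¹·h⁻¹) < 2 if and only if g·h ≠ h·g and there exists e ∈ SL(2,ℝ) with Tr e = 0 such that e·g·e⁻¹ = g⁻¹ and e·h·e⁻¹ = h⁻¹. (Geometrically, the elements e ∈ SL(2,ℝ) with Tr e = 0 are exactly the half-turns about points of the hyperbolic plane, and such an e conjugating a nontrivial isometry to its inverse forces that isometry to be hyperbolic with axis through the centre of e; so the right-hand condition says exactly that g and h are hyperbolic isometries whose axes cross.) -/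
open Matrix

private lemma tr_comm_eq (a b : Matrix (Fin 2) (Fin 2) ℝ) (ha : a.det = 1) (hb : b.det = 1) :
    (a * b * a.adjugate * b.adjugate).trace = 2 - (a * b - b * a).det := by
  rw [Matrix.det_fin_two] at ha hb
  simp [Matrix.adjugate_fin_two, Matrix.trace_fin_two, Matrix.det_fin_two,
    Matrix.mul_apply, Matrix.sub_apply, Fin.sum_univ_two]
  linear_combination (2 * (b 0 0) * (b 1 1) - 2 * (b 0 1) * (b 1 0)) * ha + 2 * hb

private lemma conj_comm_matrix (a b : Matrix (Fin 2) (Fin 2) ℝ) :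
    (a * b - b * a) * a = a.adjugate * (a * b - b * a) := by
  ext i j
  fin_cases i <;> fin_cases j <;>
    · simp [Matrix.adjugate_fin_two, Matrix.mul_apply, Matrix.sub_apply, Fin.sum_univ_two]
      ring

private lemma key_rels (a b c : Matrix (Fin 2) (Fin 2) ℝ)
    (H1 : c * a = a.adjugate * c) (H2 : c * b = b.adjugate * c)
    (htc : c 0 0 + c 1 1 = 0) :
    c 0 1 * (a * b - b * a) 0 0 = c 0 0 * (a * b - b * a) 0 1 ∧
    (a * b - b * a) 0 1 * c 1 0 = c 0 1 * (a * b - b * a) 1 0 := by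
  have h100 : (c * a) 0 0 = (a.adjugate * c) 0 0 := by rw [H1]
  have h101 : (c * a) 0 1 = (a.adjugate * c) 0 1 := by rw [H1]
  have h110 : (c * a) 1 0 = (a.adjugate * c) 1 0 := by rw [H1]
  have h111 : (c * a) 1 1 = (a.adjugate * c) 1 1 := by rw [H1]
  have h200 : (c * b) 0 0 = (b.adjugate * c) 0 0 := by rw [H2]
  have h201 : (c * b) 0 1 = (b.adjugate * c) 0 1 := by rw [H2]
  have h210 : (c * b) 1 0 = (b.adjugate * c) 1 0 := by rw [H2]
  have h211 : (c * b) 1 1 = (b.adjugate * c) 1 1 := by rw [H2]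
  simp [Matrix.adjugate_fin_two, Matrix.mul_apply, Fin.sum_univ_two]
    at h100 h101 h110 h111 h200 h201 h210 h211
  constructor
  · simp only [Matrix.mul_apply, Matrix.sub_apply, Fin.sum_univ_two]
    linear_combination (-(b 0 1) / 2) * h100 + (-(b 0 1) / 2) * h111 +
      ((a 0 1) / 2) * h200 + ((a 0 1) / 2) * h211 +
      (-((a 0 0) * (b 0 1) + (a 0 1) * (b 1 1) - (b 0 0) * (a 0 1) - (b 0 1) * (a 1 1)) / 2) * htc
  · simp only [Matrix.mul_apply, Matrix.sub_apply, Fin.sum_univ_two]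
    linear_combination (b 1 1 - b 0 0) * h100 + (-(b 1 0)) * h101 + (-(b 0 1)) * h110 +
      (a 0 0 - a 1 1) * h200 + (a 1 0) * h201 + (a 0 1) * h210

/-- `Tr[g,h] < 2` if and only if `g` and `h` do not commute and there is a
half-turn `e` (an element of `SL(2,ℝ)` of trace 0) conjugating each of `g`, `h`
to its inverse. -/
theorem stmt3 (g h : Matrix.SpecialLinearGroup (Fin 2) ℝ) :
    trSL (g * h * g⁻¹ * h⁻¹) < 2 ↔
      (g * h ≠ h * g ∧ ∃ e : Matrix.SpecialLinearGroup (Fin 2) ℝ,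
        trSL e = 0 ∧ e * g * e⁻¹ = g⁻¹ ∧ e * h * e⁻¹ = h⁻¹) := by
  set a : Matrix (Fin 2) (Fin 2) ℝ := ↑g with ha_def
  set b : Matrix (Fin 2) (Fin 2) ℝ := ↑h with hb_def
  have htr : trSL (g * h * g⁻¹ * h⁻¹) = 2 - (a * b - b * a).det := by
    have := tr_comm_eq a b g.2 h.2
    unfold trSL
    simp only [Matrix.SpecialLinearGroup.coe_mul, Matrix.SpecialLinearGroup.coe_inv]
    exact this
  constructor
  · intro hlt
    have hD : 0 < (a * b - b * a).det := by linarith [htr ▸ hlt]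
    have hab : a * b ≠ b * a := by
      intro hcom
      rw [hcom, sub_self] at hD
      simp at hD
    constructor
    · intro hcom
      apply hab
      have : ((g * h : Matrix.SpecialLinearGroup (Fin 2) ℝ) : Matrix (Fin 2) (Fin 2) ℝ)
          = ((h * g : Matrix.SpecialLinearGroup (Fin 2) ℝ) : Matrix (Fin 2) (Fin 2) ℝ) := by
        rw [hcom]
      simpa using this
    · set s : ℝ := Real.sqrt ((a * b - b * a).det) with hs_def
      have hs2 : s ^ 2 = (a * b - b * a).det := Real.sq_sqrt hD.le
      have hs0 : s ≠ 0 := by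
        have := Real.sqrt_pos.mpr hD
        exact ne_of_gt this
      have hdet : (s⁻¹ • (a * b - b * a)).det = 1 := by
        rw [Matrix.det_smul]
        simp only [Fintype.card_fin]
        rw [inv_pow, hs2]
        exact inv_mul_cancel₀ (ne_of_gt hD)
      set eSL : Matrix.SpecialLinearGroup (Fin 2) ℝ := ⟨s⁻¹ • (a * b - b * a), hdet⟩
        with heSL_def
      refine ⟨eSL, ?_, ?_, ?_⟩
      · show ((s⁻¹ • (a * b - b * a) : Matrix (Fin 2) (Fin 2) ℝ)).trace = 0
        rw [Matrix.trace_smul, Matrix.trace_sub, Matrix.trace_mul_comm a b, sub_self, smul_zero]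
      · have hmul : eSL * g = g⁻¹ * eSL := by
          apply Subtype.ext
          show (s⁻¹ • (a * b - b * a)) * a = _
          rw [Matrix.SpecialLinearGroup.coe_mul, Matrix.SpecialLinearGroup.coe_inv]
          show _ = a.adjugate * (s⁻¹ • (a * b - b * a))
          rw [smul_mul_assoc, mul_smul_comm, conj_comm_matrix]
        rw [mul_inv_eq_iff_eq_mul]
        exact hmul
      · have hmul : eSL * h = h⁻¹ * eSL := by
          apply Subtype.ext
          show (s⁻¹ • (a * b - b * a)) * b = _
          rw [Matrix.SpecialLinearGroup.coe_mul, Matrix.SpecialLinearGroup.coe_inv]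
          show _ = b.adjugate * (s⁻¹ • (a * b - b * a))
          have : b * a - a * b = b * a - a * b := rfl
          have key := conj_comm_matrix b a
          -- key : (b*a - a*b) * b = b.adjugate * (b*a - a*b)
          rw [smul_mul_assoc, mul_smul_comm]
          congr 1
          have : a * b - b * a = -(b * a - a * b) := (neg_sub _ _).symm
          rw [this, neg_mul, key, mul_neg]
        rw [mul_inv_eq_iff_eq_mul]
        exact hmul
  · rintro ⟨hne, e, hetr, heg, heh⟩
    set c : Matrix (Fin 2) (Fin 2) ℝ := ↑e with hc_def
    have H1 : c * a = a.adjugate * c := by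
      have h1 : e * g = g⁻¹ * e := by rw [← mul_inv_eq_iff_eq_mul]; exact heg
      have := congrArg (fun x : Matrix.SpecialLinearGroup (Fin 2) ℝ =>
        (x : Matrix (Fin 2) (Fin 2) ℝ)) h1
      simpa using this
    have H2 : c * b = b.adjugate * c := by
      have h1 : e * h = h⁻¹ * e := by rw [← mul_inv_eq_iff_eq_mul]; exact heh
      have := congrArg (fun x : Matrix.SpecialLinearGroup (Fin 2) ℝ =>
        (x : Matrix (Fin 2) (Fin 2) ℝ)) h1
      simpa using this
    have htc : c 0 0 + c 1 1 = 0 := by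
      have := hetr
      unfold trSL at this
      rw [Matrix.trace_fin_two] at this
      exact this
    have hdc : c 0 0 * c 1 1 - c 0 1 * c 1 0 = 1 := by
      have := e.2
      rw [Matrix.det_fin_two] at this
      exact this
    obtain ⟨R1, R3⟩ := key_rels a b c H1 H2 htc
    have hqr : c 0 1 * c 1 0 = -1 - (c 0 0) ^ 2 := by
      linear_combination (c 0 0) * htc - hdc
    have hq : c 0 1 ≠ 0 := by
      intro h0
      rw [h0, zero_mul] at hqr
      nlinarith [sq_nonneg (c 0 0)]
    have htrE : (a * b - b * a) 0 0 + (a * b - b * a) 1 1 = 0 := by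
      simp only [Matrix.mul_apply, Matrix.sub_apply, Fin.sum_univ_two]
      ring
    have hab : a * b ≠ b * a := by
      intro hcom
      apply hne
      apply Subtype.ext
      show a * b = b * a
      exact hcom
    have hβ : (a * b - b * a) 0 1 ≠ 0 := by
      intro h0
      have hE00 : (a * b - b * a) 0 0 = 0 := by
        have : c 0 1 * (a * b - b * a) 0 0 = 0 := by rw [R1, h0, mul_zero]
        exact (mul_eq_zero.mp this).resolve_left hq
      have hE10 : (a * b - b * a) 1 0 = 0 := by
        have : c 0 1 * (a * b - b * a) 1 0 = 0 := by rw [← R3, h0, zero_mul]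
        exact (mul_eq_zero.mp this).resolve_left hq
      have hE11 : (a * b - b * a) 1 1 = 0 := by linarith
      apply hab
      have hE : a * b - b * a = 0 := by
        ext i j
        fin_cases i <;> fin_cases j
        · exact hE00
        · exact h0
        · exact hE10
        · exact hE11
      exact sub_eq_zero.mp hE
    have hdetq : (a * b - b * a).det * (c 0 1) ^ 2 = ((a * b - b * a) 0 1) ^ 2 := by
      rw [Matrix.det_fin_two]
      linear_combination ((c 0 1) ^ 2 * (a * b - b * a) 0 0) * htrE
        - (c 0 1 * (a * b - b * a) 0 0 + c 0 0 * (a * b - b * a) 0 1) * R1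
        + (c 0 1 * (a * b - b * a) 0 1) * R3
        - (((a * b - b * a) 0 1) ^ 2 * c 0 0) * htc
        + ((a * b - b * a) 0 1) ^ 2 * hdc
    have hD : 0 < (a * b - b * a).det := by
      have hx : (a * b - b * a) 0 1 / c 0 1 ≠ 0 := div_ne_zero hβ hq
      have h2 : (a * b - b * a).det = ((a * b - b * a) 0 1 / c 0 1) ^ 2 := by
        rw [div_pow, eq_div_iff (pow_ne_zero 2 hq)]
        exact hdetq
      rw [h2]
      exact lt_of_le_of_ne (sq_nonneg _) (Ne.symm (pow_ne_zero 2 hx))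
    rw [htr]
    linarith
end

section
/- Let g, h ∈ SL(2,ℝ). The pair (g,h) is reducible — that is, there exists a nonzero vector v ∈ ℂ² which is a common eigenvector of g and h regarded as complex matrices — if and only if Tr(g·h·g⁻¹·h⁻¹) = 2. -/
private lemma exists_sqrt (w : ℂ) : ∃ δ : ℂ, δ ^ 2 = w :=
  IsAlgClosed.exists_pow_nat_eq w zero_lt_two

/-- Forward direction, scalar form: a common eigenvector forces the
"determinant of the commutator" polynomial to vanish. -/
private lemma key_fwd {a b c d p q r s v0 v1 μ ν : ℂ}
    (h1 : a*v0 + b*v1 = μ*v0) (h2 : c*v0 + d*v1 = μ*v1)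
    (h3 : p*v0 + q*v1 = ν*v0) (h4 : r*v0 + s*v1 = ν*v1)
    (hv : ¬(v0 = 0 ∧ v1 = 0)) :
    (b*r - c*q)^2 + (q*(a-d) + b*(s-p)) * (r*(d-a) + c*(p-s)) = 0 := by
  have KV0 : (b*r - c*q)*v0 + (q*(a-d) + b*(s-p))*v1 = 0 := by
    linear_combination (ν - p)*h1 - q*h2 + (a - μ)*h3 + b*h4
  have KV1 : (r*(d-a) + c*(p-s))*v0 - (b*r - c*q)*v1 = 0 := by
    linear_combination (-r)*h1 + (ν - s)*h2 + c*h3 + (d - μ)*h4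
  by_cases hv0 : v0 = 0
  · have hv1 : v1 ≠ 0 := fun hone => hv ⟨hv0, hone⟩
    have e1 : ((b*r - c*q)^2 + (q*(a-d) + b*(s-p)) * (r*(d-a) + c*(p-s))) * v1 = 0 := by
      linear_combination (r*(d-a) + c*(p-s))*KV0 - (b*r - c*q)*KV1
    exact (mul_eq_zero.mp e1).resolve_right hv1
  · have e0 : ((b*r - c*q)^2 + (q*(a-d) + b*(s-p)) * (r*(d-a) + c*(p-s))) * v0 = 0 := by
      linear_combination (b*r - c*q)*KV0 + (q*(a-d) + b*(s-p))*KV1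
    exact (mul_eq_zero.mp e0).resolve_right hv0

/-- Builder for the case `c ≠ 0`: an eigenvalue `μ` of the first matrix whose
eigenvector `(μ - d, c)` is also fixed (projectively) by the second matrix. -/
private lemma build1 {a b c d p q r s μ : ℂ} (hc : c ≠ 0) (hA : a*d - b*c = 1)
    (hμ : μ^2 - (a+d)*μ + 1 = 0)
    (hf : r*(μ-d)^2 + (s-p)*c*(μ-d) - q*c^2 = 0) :
    ∃ v0 v1 μ' ν : ℂ, ¬(v0 = 0 ∧ v1 = 0) ∧
      a*v0 + b*v1 = μ'*v0 ∧ c*v0 + d*v1 = μ'*v1 ∧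
      p*v0 + q*v1 = ν*v0 ∧ r*v0 + s*v1 = ν*v1 := by
  refine ⟨μ - d, c, μ, (r*(μ-d) + s*c)/c, fun hcon => hc hcon.2, ?_, by ring, ?_, ?_⟩
  · linear_combination -hμ - hA
  · have hνc : (r*(μ-d) + s*c)/c * c = r*(μ-d) + s*c := div_mul_cancel₀ _ hc
    refine mul_left_cancel₀ hc ?_
    linear_combination (-(μ-d))*hνc - hf
  · exact (div_mul_cancel₀ _ hc).symm

/-- Builder for the case `c = 0`, `r ≠ 0`: an eigenvalue `ν` of the second matrix
whose eigenvector `(ν - s, r)` is also an eigenvector of the first. -/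
private lemma build2 {a b d p q r s ν : ℂ} (hr : r ≠ 0) (hB : p*s - q*r = 1)
    (hν : ν^2 - (p+s)*ν + 1 = 0)
    (hg : (d-a)*(ν-s) - b*r = 0) :
    ∃ v0 v1 μ' ν' : ℂ, ¬(v0 = 0 ∧ v1 = 0) ∧
      a*v0 + b*v1 = μ'*v0 ∧ (0:ℂ)*v0 + d*v1 = μ'*v1 ∧
      p*v0 + q*v1 = ν'*v0 ∧ r*v0 + s*v1 = ν'*v1 := by
  refine ⟨ν - s, r, d, ν, fun hcon => hr hcon.2, ?_, by ring, ?_, by ring⟩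
  · linear_combination -hg
  · linear_combination -hν - hB

/-- Backward direction, scalar form. -/
private lemma key_bwd {a b c d p q r s : ℂ} (hA : a*d - b*c = 1) (hB : p*s - q*r = 1)
    (hK : (b*r - c*q)^2 + (q*(a-d) + b*(s-p)) * (r*(d-a) + c*(p-s)) = 0) :
    ∃ v0 v1 μ ν : ℂ, ¬(v0 = 0 ∧ v1 = 0) ∧
      a*v0 + b*v1 = μ*v0 ∧ c*v0 + d*v1 = μ*v1 ∧
      p*v0 + q*v1 = ν*v0 ∧ r*v0 + s*v1 = ν*v1 := by
  by_cases hc : c = 0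
  · subst hc
    have hA' : a*d = 1 := by linear_combination hA
    by_cases hr : r = 0
    · subst hr
      exact ⟨1, 0, a, p, fun hcon => one_ne_zero hcon.1, by ring, by ring, by ring, by ring⟩
    · obtain ⟨δ, hδ⟩ := exists_sqrt ((p+s)^2 - 4)
      have hprod : ((d-a)*((p+s+δ)/2 - s) - b*r) * ((d-a)*((p+s-δ)/2 - s) - b*r) = 0 := by
        linear_combination (-(1/4 : ℂ)*d^2 + (1/2 : ℂ)*a*d - (1/4 : ℂ)*a^2)*hδ
          + (-2 - 2*q*r + 2*p*s)*hA' + (2 - d^2 - a^2)*hB + hK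
      rcases mul_eq_zero.mp hprod with hg | hg
      · have hν : ((p+s+δ)/2)^2 - (p+s)*((p+s+δ)/2) + 1 = 0 := by linear_combination (1/4 : ℂ)*hδ
        exact build2 hr hB hν hg
      · have hν : ((p+s-δ)/2)^2 - (p+s)*((p+s-δ)/2) + 1 = 0 := by linear_combination (1/4 : ℂ)*hδ
        exact build2 hr hB hν hg
  · obtain ⟨δ, hδ⟩ := exists_sqrt ((a+d)^2 - 4)
    have hprod : (r*((a+d+δ)/2 - d)^2 + (s-p)*c*((a+d+δ)/2 - d) - q*c^2)
        * (r*((a+d-δ)/2 - d)^2 + (s-p)*c*((a+d-δ)/2 - d) - q*c^2) = 0 := by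
      linear_combination
        (-(1/4 : ℂ)*r^2 + (1/16 : ℂ)*r^2*δ^2 - (1/16 : ℂ)*d^2*r^2 + (1/4 : ℂ)*c*d*r*s
          - (1/4 : ℂ)*c*d*p*r - (1/4 : ℂ)*c^2*s^2 - (1/2 : ℂ)*c^2*q*r + (1/2 : ℂ)*c^2*p*s
          - (1/4 : ℂ)*c^2*p^2 + (3/8 : ℂ)*a*d*r^2 - (1/4 : ℂ)*a*c*r*s + (1/4 : ℂ)*a*c*p*r - (1/16 : ℂ)*a^2*r^2)*hδ
        + (-r^2 + c*d*r*s - c*d*p*r - c^2*s^2 - 2*c^2*q*r + 2*c^2*p*s - c^2*p^2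
          + b*c*r^2 + a*d*r^2 - a*c*r*s + a*c*p*r)*hA
        + (c^2)*hK
    rcases mul_eq_zero.mp hprod with hf | hf
    · have hμ : ((a+d+δ)/2)^2 - (a+d)*((a+d+δ)/2) + 1 = 0 := by linear_combination (1/4 : ℂ)*hδ
      exact build1 hc hA hμ hf
    · have hμ : ((a+d-δ)/2)^2 - (a+d)*((a+d-δ)/2) + 1 = 0 := by linear_combination (1/4 : ℂ)*hδ
      exact build1 hc hA hμ hf

/-- The trace of the commutator in terms of matrix entries. -/
private lemma tr_comm (g h : Matrix.SpecialLinearGroup (Fin 2) ℝ) :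
    trSL (g * h * g⁻¹ * h⁻¹) =
      2 + (((g : Matrix (Fin 2) (Fin 2) ℝ) 0 1 * (h : Matrix (Fin 2) (Fin 2) ℝ) 1 0
              - (g : Matrix (Fin 2) (Fin 2) ℝ) 1 0 * (h : Matrix (Fin 2) (Fin 2) ℝ) 0 1)^2
          + ((h : Matrix (Fin 2) (Fin 2) ℝ) 0 1 * ((g : Matrix (Fin 2) (Fin 2) ℝ) 0 0
                - (g : Matrix (Fin 2) (Fin 2) ℝ) 1 1)
              + (g : Matrix (Fin 2) (Fin 2) ℝ) 0 1 * ((h : Matrix (Fin 2) (Fin 2) ℝ) 1 1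
                - (h : Matrix (Fin 2) (Fin 2) ℝ) 0 0))
            * ((h : Matrix (Fin 2) (Fin 2) ℝ) 1 0 * ((g : Matrix (Fin 2) (Fin 2) ℝ) 1 1
                - (g : Matrix (Fin 2) (Fin 2) ℝ) 0 0)
              + (g : Matrix (Fin 2) (Fin 2) ℝ) 1 0 * ((h : Matrix (Fin 2) (Fin 2) ℝ) 0 0
                - (h : Matrix (Fin 2) (Fin 2) ℝ) 1 1))) := by
  have hdg : (g : Matrix (Fin 2) (Fin 2) ℝ) 0 0 * (g : Matrix (Fin 2) (Fin 2) ℝ) 1 1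
      - (g : Matrix (Fin 2) (Fin 2) ℝ) 0 1 * (g : Matrix (Fin 2) (Fin 2) ℝ) 1 0 = 1 := by
    have := g.prop; rwa [Matrix.det_fin_two] at this
  have hdh : (h : Matrix (Fin 2) (Fin 2) ℝ) 0 0 * (h : Matrix (Fin 2) (Fin 2) ℝ) 1 1
      - (h : Matrix (Fin 2) (Fin 2) ℝ) 0 1 * (h : Matrix (Fin 2) (Fin 2) ℝ) 1 0 = 1 := by
    have := h.prop; rwa [Matrix.det_fin_two] at this
  have hco : ((g * h * g⁻¹ * h⁻¹ : Matrix.SpecialLinearGroup (Fin 2) ℝ) : Matrix (Fin 2) (Fin 2) ℝ)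
      = (g : Matrix (Fin 2) (Fin 2) ℝ) * (h : Matrix (Fin 2) (Fin 2) ℝ)
        * Matrix.adjugate (g : Matrix (Fin 2) (Fin 2) ℝ)
        * Matrix.adjugate (h : Matrix (Fin 2) (Fin 2) ℝ) := by
    simp [Matrix.SpecialLinearGroup.coe_inv]
  unfold trSL
  rw [hco]
  rw [Matrix.adjugate_fin_two, Matrix.adjugate_fin_two]
  simp [Matrix.trace_fin_two, Matrix.mul_apply, Fin.sum_univ_two]
  linear_combination (2 * ((h : Matrix (Fin 2) (Fin 2) ℝ) 0 0 * (h : Matrix (Fin 2) (Fin 2) ℝ) 1 1)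
      - 2 * ((h : Matrix (Fin 2) (Fin 2) ℝ) 0 1 * (h : Matrix (Fin 2) (Fin 2) ℝ) 1 0)) * hdg
    + 2 * hdh

/-- The pair `(g,h)` of elements of SL(2,ℝ) is reducible — `g` and `h`, viewed as
complex matrices, have a common eigenvector `v ≠ 0` in `ℂ²` — if and only if
`Tr[g,h] = 2`. -/
theorem stmt4 (g h : Matrix.SpecialLinearGroup (Fin 2) ℝ) :
    (∃ v : Fin 2 → ℂ, v ≠ 0 ∧ ∃ μ ν : ℂ,
        ((g : Matrix (Fin 2) (Fin 2) ℝ).map (Complex.ofReal)).mulVec v = μ • v ∧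
        ((h : Matrix (Fin 2) (Fin 2) ℝ).map (Complex.ofReal)).mulVec v = ν • v) ↔
      trSL (g * h * g⁻¹ * h⁻¹) = 2 := by
  set a := (g : Matrix (Fin 2) (Fin 2) ℝ) 0 0 with ha
  set b := (g : Matrix (Fin 2) (Fin 2) ℝ) 0 1 with hb
  set c := (g : Matrix (Fin 2) (Fin 2) ℝ) 1 0 with hc
  set d := (g : Matrix (Fin 2) (Fin 2) ℝ) 1 1 with hd
  set p := (h : Matrix (Fin 2) (Fin 2) ℝ) 0 0 with hp
  set q := (h : Matrix (Fin 2) (Fin 2) ℝ) 0 1 with hq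
  set r := (h : Matrix (Fin 2) (Fin 2) ℝ) 1 0 with hr
  set s := (h : Matrix (Fin 2) (Fin 2) ℝ) 1 1 with hs
  have hdg : a * d - b * c = 1 := by
    have := g.prop; rw [Matrix.det_fin_two] at this; linarith
  have hdh : p * s - q * r = 1 := by
    have := h.prop; rw [Matrix.det_fin_two] at this; linarith
  have htr : trSL (g * h * g⁻¹ * h⁻¹)
      = 2 + ((b*r - c*q)^2 + (q*(a-d) + b*(s-p)) * (r*(d-a) + c*(p-s))) := tr_comm g h
  have hAc : (a : ℂ)*(d : ℂ) - (b : ℂ)*(c : ℂ) = 1 := by exact_mod_cast hdg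
  have hBc : (p : ℂ)*(s : ℂ) - (q : ℂ)*(r : ℂ) = 1 := by exact_mod_cast hdh
  constructor
  · rintro ⟨v, hv, μ, ν, hgv, hhv⟩
    have h1 := congrFun hgv 0
    have h2 := congrFun hgv 1
    have h3 := congrFun hhv 0
    have h4 := congrFun hhv 1
    simp only [Matrix.mulVec, dotProduct, Fin.sum_univ_two, Matrix.map_apply,
      Pi.smul_apply, smul_eq_mul] at h1 h2 h3 h4
    have hv' : ¬(v 0 = 0 ∧ v 1 = 0) := by
      rintro ⟨h0, hone⟩
      apply hv
      funext i
      fin_cases i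
      · exact h0
      · exact hone
    have hKc : ((b : ℂ)*(r : ℂ) - (c : ℂ)*(q : ℂ))^2
        + ((q : ℂ)*((a : ℂ)-(d : ℂ)) + (b : ℂ)*((s : ℂ)-(p : ℂ)))
          * ((r : ℂ)*((d : ℂ)-(a : ℂ)) + (c : ℂ)*((p : ℂ)-(s : ℂ))) = 0 :=
      key_fwd h1 h2 h3 h4 hv'
    have hK : (b*r - c*q)^2 + (q*(a-d) + b*(s-p)) * (r*(d-a) + c*(p-s)) = 0 := by
      exact_mod_cast hKc
    rw [htr, hK]; ring
  · intro h2tr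
    have hK : (b*r - c*q)^2 + (q*(a-d) + b*(s-p)) * (r*(d-a) + c*(p-s)) = 0 := by
      rw [htr] at h2tr; linarith
    have hKc : ((b : ℂ)*(r : ℂ) - (c : ℂ)*(q : ℂ))^2
        + ((q : ℂ)*((a : ℂ)-(d : ℂ)) + (b : ℂ)*((s : ℂ)-(p : ℂ)))
          * ((r : ℂ)*((d : ℂ)-(a : ℂ)) + (c : ℂ)*((p : ℂ)-(s : ℂ))) = 0 := by
      exact_mod_cast hK
    obtain ⟨v0, v1, μ, ν, hvne, e1, e2, e3, e4⟩ := key_bwd hAc hBc hKc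
    refine ⟨![v0, v1], ?_, μ, ν, ?_, ?_⟩
    · intro hzero
      exact hvne ⟨congrFun hzero 0, congrFun hzero 1⟩
    · funext i
      fin_cases i <;>
        simp only [Matrix.mulVec, dotProduct, Fin.sum_univ_two, Matrix.map_apply,
          Pi.smul_apply, smul_eq_mul, Matrix.cons_val_zero, Matrix.cons_val_one,
          Matrix.head_cons]
      · exact e1
      · exact e2
    · funext i
      fin_cases i <;>
        simp only [Matrix.mulVec, dotProduct, Fin.sum_univ_two, Matrix.map_apply,
          Pi.smul_apply, smul_eq_mul, Matrix.cons_val_zero, Matrix.cons_val_one,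
          Matrix.head_cons]
      · exact e3
      · exact e4
end

section
/- Let g, h ∈ SL(2,ℝ). If g is elliptic, i.e. |Tr g| < 2, and Tr(g·h·g⁻¹·h⁻¹) = 2, then g·h = h·g. -/
/-- Scalar key lemma: Minkowski-type argument on sl₂. If `u^2 + 4bc < 0`
(ellipticity), `p^2 + qr = 0` (the commutator matrix is nilpotent) and
`up + br + cq = 0` (orthogonality), then `p = q = r = 0`. -/
lemma key_sl2_elliptic (u b c p q r : ℝ) (h0 : u^2 + 4*(b*c) < 0)
    (h1 : p^2 + q*r = 0) (h2 : u*p + b*r + c*q = 0) :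
    p = 0 ∧ q = 0 ∧ r = 0 := by
  have hbc : b*c < 0 := by nlinarith [sq_nonneg u]
  have hsq : (b*r + c*q)^2 + u^2*(q*r) = 0 := by
    linear_combination (b*r + c*q - u*p)*h2 + u^2*h1
  have hqr0 : q*r ≥ 0 := by nlinarith [sq_nonneg (b*r - c*q)]
  have hp : p = 0 := by nlinarith [sq_nonneg p]
  have hqr : q*r = 0 := by nlinarith
  have hsum : b*r + c*q = 0 := by nlinarith
  have hbrcq : b*r = c*q := by nlinarith [sq_nonneg (b*r - c*q)]
  have hb : b ≠ 0 := fun hb => by simp [hb] at hbc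
  have hc : c ≠ 0 := fun hc => by simp [hc] at hbc
  have hr : r = 0 := by
    have : b*r = 0 := by linarith
    exact (mul_eq_zero.1 this).resolve_left hb
  have hq : q = 0 := by
    have : c*q = 0 := by linarith
    exact (mul_eq_zero.1 this).resolve_left hc
  exact ⟨hp, hq, hr⟩

/-- If `g` is elliptic (`|Tr g| < 2`) and `Tr[g,h] = 2`, then `g` and `h` commute. -/
theorem stmt5 (g h : Matrix.SpecialLinearGroup (Fin 2) ℝ)
    (hell : |trSL g| < 2) (hcomm : trSL (g * h * g⁻¹ * h⁻¹) = 2) :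
    g * h = h * g := by
  set G : Matrix (Fin 2) (Fin 2) ℝ := ↑g with hG
  set H : Matrix (Fin 2) (Fin 2) ℝ := ↑h with hH
  set C : Matrix (Fin 2) (Fin 2) ℝ := ↑(g * h * g⁻¹ * h⁻¹) with hC
  have hCm : C * (H * G) = G * H := by
    have e : (g * h * g⁻¹ * h⁻¹) * (h * g) = g * h := by group
    calc C * (H * G) = ↑((g * h * g⁻¹ * h⁻¹) * (h * g)) := by
            simp only [hC, hG, hH, Matrix.SpecialLinearGroup.coe_mul, mul_assoc]
      _ = ↑(g * h) := by rw [e]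
      _ = G * H := by rw [Matrix.SpecialLinearGroup.coe_mul]
  have hdetg : G.det = 1 := g.2
  have hdeth : H.det = 1 := h.2
  have hdetC : C.det = 1 := (g * h * g⁻¹ * h⁻¹).2
  have htrC : C.trace = 2 := hcomm
  have hdetC1 : (C - 1).det = 0 := by
    rw [Matrix.det_fin_two] at hdetC ⊢
    rw [Matrix.trace_fin_two] at htrC
    simp only [Matrix.sub_apply, Matrix.one_apply_eq,
      Matrix.one_apply_ne (by decide : (0:Fin 2) ≠ 1),
      Matrix.one_apply_ne (by decide : (1:Fin 2) ≠ 0)]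
    linear_combination hdetC - htrC
  have hdetK : (G * H - H * G).det = 0 := by
    have e1 : G * H - H * G = (C - 1) * (H * G) := by
      rw [sub_mul, one_mul, hCm]
    rw [e1, Matrix.det_mul, Matrix.det_mul, hdetg, hdeth, hdetC1]
    ring
  have htrg : |G 0 0 + G 1 1| < 2 := by
    have : trSL g = G 0 0 + G 1 1 := by rw [trSL, Matrix.trace_fin_two]
    rwa [this] at hell
  have hell2 : (G 0 0 + G 1 1)^2 < 4 := by
    have := abs_lt.1 htrg
    nlinarith [this.1, this.2]
  rw [Matrix.det_fin_two] at hdetg hdeth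
  simp only [Matrix.det_fin_two, Matrix.sub_apply, Matrix.mul_apply,
    Fin.sum_univ_two] at hdetK
  obtain ⟨hp, hq, hr⟩ := key_sl2_elliptic (G 0 0 - G 1 1) (G 0 1) (G 1 0)
      (G 0 1 * H 1 0 - G 1 0 * H 0 1)
      (G 0 0 * H 0 1 + G 0 1 * H 1 1 - (H 0 0 * G 0 1 + H 0 1 * G 1 1))
      (G 1 0 * H 0 0 + G 1 1 * H 1 0 - (H 1 0 * G 0 0 + H 1 1 * G 1 0))
      (by nlinarith [hell2, hdetg]) (by linear_combination -hdetK) (by ring)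
  have hmat : G * H = H * G := by
    ext i j
    fin_cases i <;> fin_cases j <;>
      simp only [Matrix.mul_apply, Fin.sum_univ_two, Fin.mk_zero, Fin.mk_one] <;>
      linarith [hp, hq, hr, hdetg, hdeth]
  exact Subtype.ext (by simpa [Matrix.SpecialLinearGroup.coe_mul] using hmat)
end

section
/- Let g, h ∈ SL(2,ℝ) with Tr(g·h·g⁻¹·h⁻¹) = 2 and g·h ≠ h·g. Then: (a) there exists a nonzero vector v ∈ ℝ² which is a common (real) eigenvector of g and h (i.e. g and h share a fixed point at infinity); (b) |Tr g| ≥ 2 and |Tr h| ≥ 2 (neither g nor h is elliptic); and (c) at least one of |Tr g|, |Tr h| is strictly greater than 2 (so either one of g,h is hyperbolic and the other parabolic, or both are hyperbolic). -/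
/-- The kernel of a nonzero 2×2 real matrix is at most one-dimensional:
any two kernel vectors are proportional. -/
lemma ker2 (m0 m1 m2 m3 v0 v1 w0 w1 : ℝ)
    (hM : ¬(m0 = 0 ∧ m1 = 0 ∧ m2 = 0 ∧ m3 = 0))
    (hv : ¬(v0 = 0 ∧ v1 = 0))
    (e1 : m0*v0 + m1*v1 = 0) (e2 : m2*v0 + m3*v1 = 0)
    (f1 : m0*w0 + m1*w1 = 0) (f2 : m2*w0 + m3*w1 = 0) :
    ∃ l : ℝ, w0 = l*v0 ∧ w1 = l*v1 := by
  have hD : v0*w1 - v1*w0 = 0 := by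
    by_contra hD
    apply hM
    refine ⟨?_, ?_, ?_, ?_⟩
    · have h : m0*(v0*w1 - v1*w0) = 0 := by linear_combination w1*e1 - v1*f1
      rcases mul_eq_zero.mp h with h | h; exact h; exact absurd h hD
    · have h : m1*(v0*w1 - v1*w0) = 0 := by linear_combination -w0*e1 + v0*f1
      rcases mul_eq_zero.mp h with h | h; exact h; exact absurd h hD
    · have h : m2*(v0*w1 - v1*w0) = 0 := by linear_combination w1*e2 - v1*f2
      rcases mul_eq_zero.mp h with h | h; exact h; exact absurd h hD
    · have h : m3*(v0*w1 - v1*w0) = 0 := by linear_combination -w0*e2 + v0*f2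
      rcases mul_eq_zero.mp h with h | h; exact h; exact absurd h hD
  by_cases h0 : v0 = 0
  · have h1 : v1 ≠ 0 := fun h1 => hv ⟨h0, h1⟩
    refine ⟨w1/v1, ?_, ?_⟩
    · have : v1*w0 = 0 := by linear_combination -hD + w1*h0
      field_simp
      rcases mul_eq_zero.mp this with h | h
      · exact absurd h h1
      · rw [h, h0]; ring
    · field_simp
  · refine ⟨w0/v0, ?_, ?_⟩
    · field_simp
    · field_simp
      linear_combination hD

/-- A real number `μ` with `μ² - t·μ + 1 = 0` forces `|t| ≥ 2`. -/
lemma tr_ge (t μ : ℝ) (hμ : μ^2 - t*μ + 1 = 0) : 2 ≤ |t| := by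
  have hμ0 : μ ≠ 0 := by intro h; rw [h] at hμ; norm_num at hμ
  have h1 : t*μ = μ^2 + 1 := by linarith
  have h2 : (t*μ)^2 = (μ^2+1)^2 := by rw [h1]
  have hμ2 : 0 < μ^2 := by positivity
  have h3 : 4 ≤ t^2 := by nlinarith [sq_nonneg (μ^2 - 1)]
  nlinarith [abs_nonneg t, sq_abs t]

/-- Main scalar lemma: all the content of the theorem, in coordinates. -/
lemma master (a b c d p q r s : ℝ)
    (hdA : a*d - b*c = 1) (hdB : p*s - q*r = 1)
    (hdetK : (b*r - q*c)^2 + (a*q + b*s - p*b - q*d)*(c*p + d*r - r*a - s*c) = 0)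
    (hKne : ¬(b*r - q*c = 0 ∧ a*q + b*s - p*b - q*d = 0 ∧ c*p + d*r - r*a - s*c = 0)) :
    ∃ v0 v1 μ ν : ℝ, ¬(v0 = 0 ∧ v1 = 0) ∧
      a*v0 + b*v1 = μ*v0 ∧ c*v0 + d*v1 = μ*v1 ∧
      p*v0 + q*v1 = ν*v0 ∧ r*v0 + s*v1 = ν*v1 ∧
      μ^2 - (a+d)*μ + 1 = 0 ∧ ν^2 - (p+s)*ν + 1 = 0 ∧
      ((a+d)^2 = 4 → (p+s)^2 = 4 → False) := by
  -- construct a kernel vector of K = AB - BA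
  obtain ⟨v0, v1, hv, e1, e2⟩ :
      ∃ v0 v1, ¬(v0 = 0 ∧ v1 = 0) ∧
        (b*r - q*c)*v0 + (a*q + b*s - p*b - q*d)*v1 = 0 ∧
        (c*p + d*r - r*a - s*c)*v0 - (b*r - q*c)*v1 = 0 := by
    by_cases hαβ : b*r - q*c = 0 ∧ a*q + b*s - p*b - q*d = 0
    · exact ⟨0, 1, by simp, by rw [hαβ.1, hαβ.2]; ring, by rw [hαβ.1]; ring⟩
    · refine ⟨a*q + b*s - p*b - q*d, -(b*r - q*c), ?_, by ring, by linear_combination hdetK⟩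
      intro ⟨h1, h2⟩
      exact hαβ ⟨by linarith [neg_eq_zero.mp h2], h1⟩
  have e2' : (c*p + d*r - r*a - s*c)*v0 + (-(b*r - q*c))*v1 = 0 := by linear_combination e2
  -- K·A = adj(A)·K since tr K = 0 and tr(KA) = 0, hence A preserves ker K; same for B
  have eA1 : (b*r - q*c)*(a*v0 + b*v1) + (a*q + b*s - p*b - q*d)*(c*v0 + d*v1) = 0 := by
    linear_combination d*e1 - b*e2
  have eA2 : (c*p + d*r - r*a - s*c)*(a*v0 + b*v1) + (-(b*r - q*c))*(c*v0 + d*v1) = 0 := by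
    linear_combination (-c)*e1 + a*e2
  have eB1 : (b*r - q*c)*(p*v0 + q*v1) + (a*q + b*s - p*b - q*d)*(r*v0 + s*v1) = 0 := by
    linear_combination s*e1 - q*e2
  have eB2 : (c*p + d*r - r*a - s*c)*(p*v0 + q*v1) + (-(b*r - q*c))*(r*v0 + s*v1) = 0 := by
    linear_combination (-r)*e1 + p*e2
  have hKne' : ¬(b*r - q*c = 0 ∧ a*q + b*s - p*b - q*d = 0 ∧
      c*p + d*r - r*a - s*c = 0 ∧ -(b*r - q*c) = 0) := by
    intro ⟨h1, h2, h3, _⟩; exact hKne ⟨h1, h2, h3⟩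
  obtain ⟨μ, hμ1, hμ2⟩ := ker2 _ _ _ _ _ _ _ _ hKne' hv e1 e2' eA1 eA2
  obtain ⟨ν, hν1, hν2⟩ := ker2 _ _ _ _ _ _ _ _ hKne' hv e1 e2' eB1 eB2
  -- characteristic polynomial equations
  have hcμ : μ^2 - (a+d)*μ + 1 = 0 := by
    have hc0 : (μ^2 - (a+d)*μ + 1) * v0 = 0 := by
      linear_combination (d - μ)*hμ1 - b*hμ2 - v0*hdA
    have hc1 : (μ^2 - (a+d)*μ + 1) * v1 = 0 := by
      linear_combination -c*hμ1 + (a - μ)*hμ2 - v1*hdA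
    by_cases h0 : v0 = 0
    · exact (mul_eq_zero.mp hc1).resolve_right fun h1 => hv ⟨h0, h1⟩
    · exact (mul_eq_zero.mp hc0).resolve_right h0
  have hcν : ν^2 - (p+s)*ν + 1 = 0 := by
    have hd0 : (ν^2 - (p+s)*ν + 1) * v0 = 0 := by
      linear_combination (s - ν)*hν1 - q*hν2 - v0*hdB
    have hd1 : (ν^2 - (p+s)*ν + 1) * v1 = 0 := by
      linear_combination -r*hν1 + (p - ν)*hν2 - v1*hdB
    by_cases h0 : v0 = 0
    · exact (mul_eq_zero.mp hd1).resolve_right fun h1 => hv ⟨h0, h1⟩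
    · exact (mul_eq_zero.mp hd0).resolve_right h0
  refine ⟨v0, v1, μ, ν, hv, hμ1, hμ2, hν1, hν2, hcμ, hcν, ?_⟩
  -- part (c): both traces cannot be ±2
  intro hT hU
  have htμ : a + d = 2*μ := by
    have h : (a + d - 2*μ)^2 = 0 := by linear_combination hT + 4*hcμ
    have := pow_eq_zero_iff (n := 2) (by norm_num) |>.mp h
    linarith
  have htν : p + s = 2*ν := by
    have h : (p + s - 2*ν)^2 = 0 := by linear_combination hU + 4*hcν
    have := pow_eq_zero_iff (n := 2) (by norm_num) |>.mp h
    linarith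
  have hNv1 : (a-μ)*v0 + b*v1 = 0 := by linear_combination hμ1
  have hNv2 : c*v0 + (d-μ)*v1 = 0 := by linear_combination hμ2
  have hMv1 : (p-ν)*v0 + q*v1 = 0 := by linear_combination hν1
  have hMv2 : r*v0 + (s-ν)*v1 = 0 := by linear_combination hν2
  have hdetN : (a-μ)*(d-μ) - b*c = 0 := by linear_combination hcμ + hdA
  have hdetM : (p-ν)*(s-ν) - q*r = 0 := by linear_combination hcν + hdB
  by_cases hN : a-μ = 0 ∧ b = 0 ∧ c = 0 ∧ d-μ = 0
  · obtain ⟨h1, h2, h3, h4⟩ := hN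
    exact hKne ⟨by linear_combination r*h2 - q*h3,
      by linear_combination q*h1 + (s - p)*h2 - q*h4,
      by linear_combination -r*h1 + (p - s)*h3 + r*h4⟩
  by_cases hM : p-ν = 0 ∧ q = 0 ∧ r = 0 ∧ s-ν = 0
  · obtain ⟨h1, h2, h3, h4⟩ := hM
    exact hKne ⟨by linear_combination b*h3 - c*h2,
      by linear_combination b*h4 - b*h1 + (a - d)*h2,
      by linear_combination c*h1 - c*h4 + (d - a)*h3⟩
  have htrN : (a-μ) + (d-μ) = 0 := by linarith
  have htrM : (p-ν) + (s-ν) = 0 := by linarith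
  obtain ⟨k0, hk0a, hk0b⟩ := ker2 (a-μ) b c (d-μ) v0 v1 (a-μ) c hN hv hNv1 hNv2
    (by linear_combination (a-μ)*htrN - hdetN) (by linear_combination c*htrN)
  obtain ⟨k1, hk1a, hk1b⟩ := ker2 (a-μ) b c (d-μ) v0 v1 b (d-μ) hN hv hNv1 hNv2
    (by linear_combination b*htrN) (by linear_combination (d-μ)*htrN - hdetN)
  obtain ⟨l0, hl0a, hl0b⟩ := ker2 (p-ν) q r (s-ν) v0 v1 (p-ν) r hM hv hMv1 hMv2
    (by linear_combination (p-ν)*htrM - hdetM) (by linear_combination r*htrM)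
  obtain ⟨l1, hl1a, hl1b⟩ := ker2 (p-ν) q r (s-ν) v0 v1 q (s-ν) hM hv hMv1 hMv2
    (by linear_combination q*htrM) (by linear_combination (s-ν)*htrM - hdetM)
  have hNM00 : (a-μ)*(p-ν) + b*r = 0 := by
    linear_combination l0*hNv1 + (a-μ)*hl0a + b*hl0b
  have hNM01 : (a-μ)*q + b*(s-ν) = 0 := by
    linear_combination l1*hNv1 + (a-μ)*hl1a + b*hl1b
  have hNM10 : c*(p-ν) + (d-μ)*r = 0 := by
    linear_combination l0*hNv2 + c*hl0a + (d-μ)*hl0b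
  have hMN00 : (p-ν)*(a-μ) + q*c = 0 := by
    linear_combination k0*hMv1 + (p-ν)*hk0a + q*hk0b
  have hMN01 : (p-ν)*b + q*(d-μ) = 0 := by
    linear_combination k1*hMv1 + (p-ν)*hk1a + q*hk1b
  have hMN10 : r*(a-μ) + (s-ν)*c = 0 := by
    linear_combination k0*hMv2 + r*hk0a + (s-ν)*hk0b
  exact hKne ⟨by linear_combination hNM00 - hMN00,
    by linear_combination hNM01 - hMN01,
    by linear_combination hNM10 - hMN10⟩

/-- If `Tr[g,h] = 2` and `g`, `h` do not commute, then:
(a) `g` and `h` have a common real eigenvector (a common fixed point at infinity);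
(b) neither `g` nor `h` is elliptic (`|Tr g| ≥ 2` and `|Tr h| ≥ 2`); and
(c) at least one of `|Tr g|`, `|Tr h|` is strictly greater than 2. -/
theorem stmt6 (g h : Matrix.SpecialLinearGroup (Fin 2) ℝ)
    (hcomm : trSL (g * h * g⁻¹ * h⁻¹) = 2) (hne : g * h ≠ h * g) :
    (∃ v : Fin 2 → ℝ, v ≠ 0 ∧ ∃ μ ν : ℝ,
        (g : Matrix (Fin 2) (Fin 2) ℝ).mulVec v = μ • v ∧
        (h : Matrix (Fin 2) (Fin 2) ℝ).mulVec v = ν • v) ∧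
    (2 ≤ |trSL g| ∧ 2 ≤ |trSL h|) ∧
    (2 < |trSL g| ∨ 2 < |trSL h|) := by
  obtain ⟨a, b, c, d, hg⟩ : ∃ a b c d, (g : Matrix (Fin 2) (Fin 2) ℝ) = !![a,b;c,d] :=
    ⟨_, _, _, _, Matrix.eta_fin_two _⟩
  obtain ⟨p, q, r, s, hh⟩ : ∃ p q r s, (h : Matrix (Fin 2) (Fin 2) ℝ) = !![p,q;r,s] :=
    ⟨_, _, _, _, Matrix.eta_fin_two _⟩
  have hdA : a*d - b*c = 1 := by
    have := g.2; rw [hg, Matrix.det_fin_two_of] at this; linarith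
  have hdB : p*s - q*r = 1 := by
    have := h.2; rw [hh, Matrix.det_fin_two_of] at this; linarith
  unfold trSL at hcomm
  simp only [Matrix.SpecialLinearGroup.coe_mul, Matrix.SpecialLinearGroup.coe_inv,
    hg, hh, Matrix.adjugate_fin_two_of, Matrix.mul_fin_two,
    Matrix.trace_fin_two_of] at hcomm
  have hdetK : (b*r - q*c)^2 + (a*q + b*s - p*b - q*d)*(c*p + d*r - r*a - s*c) = 0 := by
    linear_combination -(2*(p*s-q*r))*hdA - 2*hdB + hcomm
  have hKne : ¬(b*r - q*c = 0 ∧ a*q + b*s - p*b - q*d = 0 ∧ c*p + d*r - r*a - s*c = 0) := by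
    rintro ⟨h1, h2, h3⟩
    apply hne
    apply Subtype.coe_injective
    show ((g * h : Matrix.SpecialLinearGroup (Fin 2) ℝ) : Matrix (Fin 2) (Fin 2) ℝ)
      = ((h * g : Matrix.SpecialLinearGroup (Fin 2) ℝ) : Matrix (Fin 2) (Fin 2) ℝ)
    rw [Matrix.SpecialLinearGroup.coe_mul, Matrix.SpecialLinearGroup.coe_mul, hg, hh]
    rw [Matrix.mul_fin_two, Matrix.mul_fin_two]
    refine Matrix.ext ?_
    intro i j
    fin_cases i <;> fin_cases j <;> simp
    · linear_combination h1
    · linear_combination h2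
    · linear_combination h3
    · linear_combination -h1
  obtain ⟨v0, v1, μ, ν, hv, hμ1, hμ2, hν1, hν2, hcμ, hcν, hc⟩ :=
    master a b c d p q r s hdA hdB hdetK hKne
  have htg : trSL g = a + d := by
    unfold trSL; rw [hg, Matrix.trace_fin_two_of]
  have hth : trSL h = p + s := by
    unfold trSL; rw [hh, Matrix.trace_fin_two_of]
  have hbg : 2 ≤ |trSL g| := by rw [htg]; exact tr_ge _ μ hcμ
  have hbh : 2 ≤ |trSL h| := by rw [hth]; exact tr_ge _ ν hcν
  refine ⟨⟨![v0, v1], ?_, μ, ν, ?_, ?_⟩, ⟨hbg, hbh⟩, ?_⟩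
  · intro hzero
    exact hv ⟨by simpa using congrFun hzero 0, by simpa using congrFun hzero 1⟩
  · rw [hg]
    funext i
    fin_cases i <;>
      simp [Matrix.mulVec, dotProduct, Fin.sum_univ_two] <;>
      [linear_combination hμ1; linear_combination hμ2]
  · rw [hh]
    funext i
    fin_cases i <;>
      simp [Matrix.mulVec, dotProduct, Fin.sum_univ_two] <;>
      [linear_combination hν1; linear_combination hν2]
  · by_contra hcon
    push_neg at hcon
    obtain ⟨h1, h2⟩ := hcon
    apply hc
    · rw [htg] at h1 hbg
      have : |a + d| = 2 := le_antisymm h1 hbg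
      have h4 : (a+d)^2 = |a+d|^2 := (sq_abs _).symm
      rw [this] at h4; linarith [h4]
    · rw [hth] at h2 hbh
      have : |p + s| = 2 := le_antisymm h2 hbh
      have h4 : (p+s)^2 = |p+s|^2 := (sq_abs _).symm
      rw [this] at h4; linarith [h4]
end

section
/- Let g, h ∈ SL(2,ℝ). If Tr(g·h·g⁻¹·h⁻¹) = 2 and the subgroup of SL(2,ℝ) generated by g and h is virtually abelian, then g·h = h·g. (A reducible virtually abelian representation is abelian.) -/
open Matrix

/-- A group is virtually abelian if it has an abelian subgroup of finite index. -/
def IsVirtuallyAbelian (G : Type*) [Group G] : Prop :=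
  ∃ H : Subgroup G, H.FiniteIndex ∧ ∀ a b : H, a * b = b * a

namespace Stmt8Aux

abbrev M2 := Matrix (Fin 2) (Fin 2) ℝ

lemma exists_pow_comm {G : Type*} [Group G] (hva : IsVirtuallyAbelian G) :
    ∃ d : ℕ, 0 < d ∧ ∀ u v : G, u ^ d * v ^ d = v ^ d * u ^ d := by
  obtain ⟨H, hfi, hab⟩ := hva
  haveI := hfi
  refine ⟨H.normalCore.index, Nat.pos_of_ne_zero Subgroup.FiniteIndex.index_ne_zero, ?_⟩
  intro u v
  have hu : u ^ H.normalCore.index ∈ H := H.normalCore_le (H.normalCore.pow_index_mem u)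
  have hv : v ^ H.normalCore.index ∈ H := H.normalCore_le (H.normalCore.pow_index_mem v)
  exact congrArg Subtype.val (hab ⟨_, hu⟩ ⟨_, hv⟩)

lemma unip (C : M2) (hd : C.det = 1) (ht : C.trace = 2) : (C - 1) * (C - 1) = 0 := by
  rw [Matrix.det_fin_two] at hd
  rw [Matrix.trace_fin_two] at ht
  ext i j
  fin_cases i <;> fin_cases j <;>
    simp [Matrix.mul_apply, Fin.sum_univ_two, Matrix.sub_apply, Matrix.one_apply]
  · linear_combination C 0 0 * ht - hd
  · linear_combination C 0 1 * ht
  · linear_combination C 1 0 * ht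
  · linear_combination C 1 1 * ht - hd

lemma pow_unip (N : M2) (hN : N * N = 0) : ∀ k : ℕ, (1 + N) ^ k = 1 + (k : ℝ) • N := by
  intro k
  induction k with
  | zero => simp
  | succ n ih =>
      rw [pow_succ, ih]
      push_cast
      rw [add_mul, mul_add, mul_add, one_mul, mul_one, smul_mul_assoc, hN, smul_zero,
        add_smul, one_smul]
      rw [one_mul]; abel

lemma commutant (N M : M2) (hN2 : N * N = 0) (hNt : N.trace = 0)
    (hMt : M.trace = 0) (hMN : M * N = N * M) (hN : N ≠ 0) :
    ∃ s : ℝ, M = s • N := by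
  rw [Matrix.trace_fin_two] at hNt hMt
  have hN11 : N 1 1 = -N 0 0 := by linarith
  have hM11 : M 1 1 = -M 0 0 := by linarith
  have hp : N 0 0 * N 0 0 + N 0 1 * N 1 0 = 0 := by
    have := congrFun (congrFun hN2 0) 0
    simpa [Matrix.mul_apply, Fin.sum_univ_two] using this
  have e00 := congrFun (congrFun hMN 0) 0
  have e01 := congrFun (congrFun hMN 0) 1
  have e10 := congrFun (congrFun hMN 1) 0
  simp [Matrix.mul_apply, Fin.sum_univ_two] at e00 e01 e10
  have h1 : M 0 1 * N 1 0 = N 0 1 * M 1 0 := by linarith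
  have h2 : M 0 0 * N 0 1 = N 0 0 * M 0 1 := by
    rw [hN11, hM11] at e01; linarith
  have h3 : N 0 0 * M 1 0 = M 0 0 * N 1 0 := by
    rw [hN11, hM11] at e10; linarith
  rcases ne_or_eq (N 0 1) 0 with hq | hq
  · refine ⟨M 0 1 / N 0 1, ?_⟩
    ext i j
    fin_cases i <;> fin_cases j <;> simp [Matrix.smul_apply] <;> field_simp
    · linear_combination h2
    · linear_combination -h1
    · linear_combination N 0 1 * hM11 - M 0 1 * hN11 - h2
  · have hp0 : N 0 0 = 0 := by
      have h : N 0 0 * N 0 0 = 0 := by rw [hq] at hp; linarith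
      exact mul_self_eq_zero.mp h
    have hr : N 1 0 ≠ 0 := by
      intro hr0
      apply hN
      ext i j
      fin_cases i <;> fin_cases j <;> simp [hp0, hq, hr0, hN11]
    refine ⟨M 1 0 / N 1 0, ?_⟩
    have hm0 : M 0 0 = 0 := by
      rw [hp0] at h3
      rcases mul_eq_zero.mp (by simpa using h3.symm : M 0 0 * N 1 0 = 0) with h | h
      · exact h
      · exact absurd h hr
    have hu0 : M 0 1 = 0 := by
      rw [hq] at h1
      rcases mul_eq_zero.mp (by simpa using h1 : M 0 1 * N 1 0 = 0) with h | h
      · exact h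
      · exact absurd h hr
    ext i j
    fin_cases i <;> fin_cases j <;>
      simp [Matrix.smul_apply, hm0, hu0, hp0, hq, hM11, hN11] <;> field_simp

lemma heart0 (A B N : M2) (s s' : ℝ)
    (h00 : N 0 0 = 0) (h10 : N 1 0 = 0) (h11 : N 1 1 = 0) (ht : N 0 1 ≠ 0)
    (hs : s = 1 ∨ s = -1) (hs' : s' = 1 ∨ s' = -1)
    (hdA : A.det = 1) (hdB : B.det = 1)
    (hAN : A * N = s • (N * A))
    (hBN : B * N = s' • (N * B))
    (hc : A * B = B * A + N * (B * A)) : False := by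
  set t := N 0 1 with htd
  rw [Matrix.det_fin_two] at hdA hdB
  have a00 := congrFun (congrFun hAN 0) 0
  have a01 := congrFun (congrFun hAN 0) 1
  have b00 := congrFun (congrFun hBN 0) 0
  have b01 := congrFun (congrFun hBN 0) 1
  have c01 := congrFun (congrFun hc 0) 1
  simp only [Matrix.mul_apply, Fin.sum_univ_two, Matrix.smul_apply, Matrix.add_apply,
    h00, h10, h11, smul_eq_mul] at a00 a01 b00 b01 c01
  have hsne : s ≠ 0 := by rcases hs with h | h <;> rw [h] <;> norm_num
  have hs'ne : s' ≠ 0 := by rcases hs' with h | h <;> rw [h] <;> norm_num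
  have hA10 : A 1 0 = 0 := by
    have h : s * (t * A 1 0) = 0 := by linarith
    rcases mul_eq_zero.mp h with h | h
    · exact absurd h hsne
    · rcases mul_eq_zero.mp h with h | h
      · exact absurd h ht
      · exact h
  have hB10 : B 1 0 = 0 := by
    have h : s' * (t * B 1 0) = 0 := by linarith
    rcases mul_eq_zero.mp h with h | h
    · exact absurd h hs'ne
    · rcases mul_eq_zero.mp h with h | h
      · exact absurd h ht
      · exact h
  have hA : A 0 0 = s * A 1 1 := by
    have h : (A 0 0 - s * A 1 1) * t = 0 := by linarith
    rcases mul_eq_zero.mp h with h | h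
    · linarith
    · exact absurd h ht
  have hB : B 0 0 = s' * B 1 1 := by
    have h : (B 0 0 - s' * B 1 1) * t = 0 := by linarith
    rcases mul_eq_zero.mp h with h | h
    · linarith
    · exact absurd h ht
  rw [hA10, mul_zero, sub_zero] at hdA
  rw [hB10, mul_zero, sub_zero] at hdB
  have hsA : A 0 0 = A 1 1 ∧ A 1 1 * A 1 1 = 1 := by
    rcases hs with h | h
    · rw [h, one_mul] at hA; rw [hA] at hdA; exact ⟨hA, hdA⟩
    · exfalso; rw [h] at hA; rw [hA] at hdA; nlinarith [sq_nonneg (A 1 1)]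
  have hsB : B 0 0 = B 1 1 ∧ B 1 1 * B 1 1 = 1 := by
    rcases hs' with h | h
    · rw [h, one_mul] at hB; rw [hB] at hdB; exact ⟨hB, hdB⟩
    · exfalso; rw [h] at hB; rw [hB] at hdB; nlinarith [sq_nonneg (B 1 1)]
  obtain ⟨hA', hA2⟩ := hsA
  obtain ⟨hB', hB2⟩ := hsB
  have : t * (B 1 1 * A 1 1) = 0 := by
    rw [hB10, hA', hB'] at c01
    linear_combination -c01
  rcases mul_eq_zero.mp this with h | h
  · exact ht h
  · rcases mul_eq_zero.mp h with h | h <;> nlinarith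

lemma sandwich (P Pinv : M2) (h : P * Pinv = 1) (X Y : M2) :
    (Pinv * X * P) * (Pinv * Y * P) = Pinv * (X * Y) * P := by
  calc (Pinv * X * P) * (Pinv * Y * P) = Pinv * (X * ((P * Pinv) * (Y * P))) := by
        simp only [mul_assoc]
      _ = Pinv * (X * Y) * P := by rw [h, one_mul]; simp only [mul_assoc]

lemma transfer (P Pinv A B N : M2) (s s' : ℝ) (hPP : P * Pinv = 1) (hPV : Pinv * P = 1)
    (hdA : A.det = 1) (hdB : B.det = 1)
    (hAN : A * N = s • (N * A)) (hBN : B * N = s' • (N * B))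
    (hc : A * B = B * A + N * (B * A)) :
    (Pinv * A * P).det = 1 ∧ (Pinv * B * P).det = 1 ∧
    (Pinv * A * P) * (Pinv * N * P) = s • ((Pinv * N * P) * (Pinv * A * P)) ∧
    (Pinv * B * P) * (Pinv * N * P) = s' • ((Pinv * N * P) * (Pinv * B * P)) ∧
    (Pinv * A * P) * (Pinv * B * P) =
      (Pinv * B * P) * (Pinv * A * P) + (Pinv * N * P) * ((Pinv * B * P) * (Pinv * A * P)) := by
  have hdet : Pinv.det * P.det = 1 := by
    have := congrArg Matrix.det hPV
    rwa [Matrix.det_mul, Matrix.det_one] at this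
  refine ⟨?_, ?_, ?_, ?_, ?_⟩
  · rw [Matrix.det_mul, Matrix.det_mul, hdA, mul_one, hdet]
  · rw [Matrix.det_mul, Matrix.det_mul, hdB, mul_one, hdet]
  · rw [sandwich P Pinv hPP, sandwich P Pinv hPP, hAN, mul_smul_comm, smul_mul_assoc]
  · rw [sandwich P Pinv hPP, sandwich P Pinv hPP, hBN, mul_smul_comm, smul_mul_assoc]
  · rw [sandwich P Pinv hPP, sandwich P Pinv hPP, sandwich P Pinv hPP, hc]
    rw [Matrix.mul_add, Matrix.add_mul]

lemma heart (A B N : M2) (s s' : ℝ)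
    (hs : s = 1 ∨ s = -1) (hs' : s' = 1 ∨ s' = -1)
    (hdA : A.det = 1) (hdB : B.det = 1)
    (hN2 : N * N = 0) (hNt : N.trace = 0) (hq : N 0 1 ≠ 0)
    (hAN : A * N = s • (N * A)) (hBN : B * N = s' • (N * B))
    (hc : A * B = B * A + N * (B * A)) : False := by
  set P : M2 := !![N 0 1, 0; -N 0 0, 1] with hPdef
  set Pinv : M2 := !![1 / N 0 1, 0; N 0 0 / N 0 1, 1] with hPidef
  have hPP : P * Pinv = 1 := by
    ext i j
    fin_cases i <;> fin_cases j <;>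
      simp only [hPdef, hPidef, Matrix.mul_apply, Fin.sum_univ_two, Matrix.one_apply,
        Matrix.of_apply, Matrix.cons_val', Matrix.cons_val_zero, Matrix.cons_val_one,
        Matrix.head_cons, Matrix.empty_val', Matrix.cons_val_fin_one, Matrix.head_fin_const] <;>
      norm_num <;> field_simp <;> ring
  have hPV : Pinv * P = 1 := by
    ext i j
    fin_cases i <;> fin_cases j <;>
      simp only [hPdef, hPidef, Matrix.mul_apply, Fin.sum_univ_two, Matrix.one_apply,
        Matrix.of_apply, Matrix.cons_val', Matrix.cons_val_zero, Matrix.cons_val_one,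
        Matrix.head_cons, Matrix.empty_val', Matrix.cons_val_fin_one, Matrix.head_fin_const] <;>
      norm_num <;> field_simp <;> ring
  have hNP : Pinv * N * P = !![0, 1; 0, 0] := by
    have hN11 : N 1 1 = -N 0 0 := by
      rw [Matrix.trace_fin_two] at hNt; linarith
    have hp : N 0 0 * N 0 0 + N 0 1 * N 1 0 = 0 := by
      have := congrFun (congrFun hN2 0) 0
      simpa [Matrix.mul_apply, Fin.sum_univ_two] using this
    ext i j
    fin_cases i <;> fin_cases j <;>
      simp only [hPdef, hPidef, Matrix.mul_apply, Fin.sum_univ_two, Matrix.of_apply,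
        Matrix.cons_val', Matrix.cons_val_zero, Matrix.cons_val_one, Matrix.head_cons,
        Matrix.empty_val', Matrix.cons_val_fin_one, Matrix.head_fin_const, hN11, Fin.mk_one, Fin.zero_eta] <;>
      field_simp <;> ring_nf
    repeat' linear_combination hp
    repeat' linear_combination N 0 1 * hp
  obtain ⟨d1, d2, t3, t4, t5⟩ := transfer P Pinv A B N s s' hPP hPV hdA hdB hAN hBN hc
  rw [hNP] at t3 t4 t5
  exact heart0 _ _ !![0, 1; 0, 0] s s' (by norm_num) (by norm_num) (by norm_num)
    (by norm_num) hs hs' d1 d2 t3 t4 t5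

lemma key (A B N : M2) (s s' : ℝ)
    (hs : s = 1 ∨ s = -1) (hs' : s' = 1 ∨ s' = -1)
    (hdA : A.det = 1) (hdB : B.det = 1)
    (hN2 : N * N = 0) (hNt : N.trace = 0) (hN : N ≠ 0)
    (hAN : A * N = s • (N * A)) (hBN : B * N = s' • (N * B))
    (hc : A * B = B * A + N * (B * A)) : False := by
  rcases ne_or_eq (N 0 1) 0 with hq | hq
  · exact heart A B N s s' hs hs' hdA hdB hN2 hNt hq hAN hBN hc
  · have hN11 : N 1 1 = -N 0 0 := by
      rw [Matrix.trace_fin_two] at hNt; linarith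
    have hp : N 0 0 * N 0 0 + N 0 1 * N 1 0 = 0 := by
      have := congrFun (congrFun hN2 0) 0
      simpa [Matrix.mul_apply, Fin.sum_univ_two] using this
    have hp0 : N 0 0 = 0 := by
      have h : N 0 0 * N 0 0 = 0 := by rw [hq] at hp; linarith
      exact mul_self_eq_zero.mp h
    have hr : N 1 0 ≠ 0 := by
      intro hr0
      apply hN
      ext i j
      fin_cases i <;> fin_cases j <;> simp [hp0, hq, hr0, hN11]
    set J : M2 := !![0, 1; 1, 0] with hJdef
    have hJJ : J * J = 1 := by
      ext i j
      fin_cases i <;> fin_cases j <;>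
        simp [hJdef, Matrix.mul_apply, Fin.sum_univ_two, Matrix.one_apply]
    obtain ⟨d1, d2, t3, t4, t5⟩ := transfer J J A B N s s' hJJ hJJ hdA hdB hAN hBN hc
    apply heart (J * A * J) (J * B * J) (J * N * J) s s' hs hs' d1 d2 ?_ ?_ ?_ t3 t4 t5
    · rw [sandwich J J hJJ, hN2, Matrix.mul_zero, Matrix.zero_mul]
    · rw [Matrix.trace_mul_comm, ← mul_assoc, hJJ, one_mul, hNt]
    · have : (J * N * J) 0 1 = N 1 0 := by
        simp [hJdef, Matrix.vecMul, dotProduct, Matrix.mul_apply, Fin.sum_univ_two]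
      rw [this]; exact hr

end Stmt8Aux
/-- If `Tr[g,h] = 2` (i.e. the pair `(g,h)` is reducible) and the subgroup
generated by `g` and `h` is virtually abelian, then `g` and `h` commute. -/
theorem stmt8 (g h : Matrix.SpecialLinearGroup (Fin 2) ℝ)
    (hcomm : trSL (g * h * g⁻¹ * h⁻¹) = 2)
    (hva : IsVirtuallyAbelian
      (Subgroup.closure ({g, h} : Set (Matrix.SpecialLinearGroup (Fin 2) ℝ)))) :
    g * h = h * g := by
  classical
  set c := g * h * g⁻¹ * h⁻¹ with hcdef
  suffices hc1 : c = 1 by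
    calc g * h = (g * h * g⁻¹ * h⁻¹) * (h * g) := by group
      _ = h * g := by rw [← hcdef, hc1, one_mul]
  -- group-theoretic input
  obtain ⟨d, hdpos, hcd⟩ := Stmt8Aux.exists_pow_comm hva
  set G := Subgroup.closure ({g, h} : Set (Matrix.SpecialLinearGroup (Fin 2) ℝ)) with hGdef
  have hgG : g ∈ G := Subgroup.subset_closure (by simp)
  have hhG : h ∈ G := Subgroup.subset_closure (by simp)
  have hcG : c ∈ G := by
    rw [hcdef]
    exact mul_mem (mul_mem (mul_mem hgG hhG) (inv_mem hgG)) (inv_mem hhG)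
  have hgcG : g * c * g⁻¹ ∈ G := mul_mem (mul_mem hgG hcG) (inv_mem hgG)
  have hhcG : h * c * h⁻¹ ∈ G := mul_mem (mul_mem hhG hcG) (inv_mem hhG)
  have pow_comm : ∀ (u v : Matrix.SpecialLinearGroup (Fin 2) ℝ), u ∈ G → v ∈ G →
      u ^ d * v ^ d = v ^ d * u ^ d := by
    intro u v hu hv
    have := congrArg Subtype.val (hcd ⟨u, hu⟩ ⟨v, hv⟩)
    simpa using this
  -- matrix-level data
  set A : Stmt8Aux.M2 := ↑g with hAdef
  set B : Stmt8Aux.M2 := ↑h with hBdef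
  set Ai : Stmt8Aux.M2 := ↑(g⁻¹) with hAidef
  set Bi : Stmt8Aux.M2 := ↑(h⁻¹) with hBidef
  set C : Stmt8Aux.M2 := ↑c with hCdef
  have hAAi : A * Ai = 1 := by
    rw [hAdef, hAidef, ← Matrix.SpecialLinearGroup.coe_mul, mul_inv_cancel,
      Matrix.SpecialLinearGroup.coe_one]
  have hAiA : Ai * A = 1 := by
    rw [hAdef, hAidef, ← Matrix.SpecialLinearGroup.coe_mul, inv_mul_cancel,
      Matrix.SpecialLinearGroup.coe_one]
  have hBBi : B * Bi = 1 := by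
    rw [hBdef, hBidef, ← Matrix.SpecialLinearGroup.coe_mul, mul_inv_cancel,
      Matrix.SpecialLinearGroup.coe_one]
  have hBiB : Bi * B = 1 := by
    rw [hBdef, hBidef, ← Matrix.SpecialLinearGroup.coe_mul, inv_mul_cancel,
      Matrix.SpecialLinearGroup.coe_one]
  have htrC : C.trace = 2 := hcomm
  have hdetC : C.det = 1 := c.prop
  have hdetA : A.det = 1 := g.prop
  have hdetB : B.det = 1 := h.prop
  set N : Stmt8Aux.M2 := C - 1 with hNdef
  have hN2 : N * N = 0 := Stmt8Aux.unip C hdetC htrC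
  have hNt : N.trace = 0 := by
    rw [hNdef, Matrix.trace_sub, htrC, Matrix.trace_one]
    norm_num
  have hC1N : C = 1 + N := by rw [hNdef]; abel
  -- if N = 0 we are done
  rcases eq_or_ne N 0 with hN0 | hNne
  · apply Subtype.coe_injective
    show (c : Stmt8Aux.M2) = ((1 : Matrix.SpecialLinearGroup (Fin 2) ℝ) : Stmt8Aux.M2)
    rw [← hCdef, hC1N, hN0, add_zero, Matrix.SpecialLinearGroup.coe_one]
  exfalso
  have hd0 : (d : ℝ) ≠ 0 := Nat.cast_ne_zero.mpr hdpos.ne'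
  -- the matrix of c^d
  have hCd : ((c ^ d : Matrix.SpecialLinearGroup (Fin 2) ℝ) : Stmt8Aux.M2)
      = 1 + (d : ℝ) • N := by
    rw [Matrix.SpecialLinearGroup.coe_pow, ← hCdef, hC1N, Stmt8Aux.pow_unip N hN2 d]
  set E : Stmt8Aux.M2 := (d : ℝ) • N with hEdef
  have hE2 : E * E = 0 := by
    rw [hEdef, smul_mul_assoc, mul_smul_comm, hN2, smul_zero, smul_zero]
  have hEt : E.trace = 0 := by rw [hEdef, Matrix.trace_smul, hNt, smul_zero]
  have hEne : E ≠ 0 := smul_ne_zero hd0 hNne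
  -- a helper for extracting commutation
  have expand : ∀ X Y : Stmt8Aux.M2, (1 + X) * (1 + Y) = (1 + Y) * (1 + X) → X * Y = Y * X := by
    intro X Y hXY
    have h0 : X * Y - Y * X = (1 + X) * (1 + Y) - (1 + Y) * (1 + X) := by noncomm_ring
    rw [hXY, sub_self] at h0
    exact sub_eq_zero.mp h0
  -- A^d commutes with E, hence with N
  have hAdE : A ^ d * N = N * A ^ d := by
    have h1 := pow_comm g c hgG hcG
    have h2 := congrArg Subtype.val h1
    simp only [Matrix.SpecialLinearGroup.coe_mul, hCd, Matrix.SpecialLinearGroup.coe_pow] at h2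
    have h3 : A ^ d * (1 + E) = (1 + E) * A ^ d := by simpa using h2
    have h4 : A ^ d + A ^ d * E = A ^ d + E * A ^ d := by
      calc A ^ d + A ^ d * E = A ^ d * (1 + E) := by rw [mul_add, mul_one]
        _ = (1 + E) * A ^ d := h3
        _ = A ^ d + E * A ^ d := by rw [add_mul, one_mul]
    have h5 := add_left_cancel h4
    rw [hEdef, mul_smul_comm, smul_mul_assoc] at h5
    exact smul_right_injective _ hd0 h5
  have hBdE : B ^ d * N = N * B ^ d := by
    have h1 := pow_comm h c hhG hcG
    have h2 := congrArg Subtype.val h1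
    simp only [Matrix.SpecialLinearGroup.coe_mul, hCd, Matrix.SpecialLinearGroup.coe_pow] at h2
    have h3 : B ^ d * (1 + E) = (1 + E) * B ^ d := by simpa using h2
    have h4 : B ^ d + B ^ d * E = B ^ d + E * B ^ d := by
      calc B ^ d + B ^ d * E = B ^ d * (1 + E) := by rw [mul_add, mul_one]
        _ = (1 + E) * B ^ d := h3
        _ = B ^ d + E * B ^ d := by rw [add_mul, one_mul]
    have h5 := add_left_cancel h4
    rw [hEdef, mul_smul_comm, smul_mul_assoc] at h5
    exact smul_right_injective _ hd0 h5
  -- conjugate commutation : (A E Ai) commutes with E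
  have hconjA : (A * E * Ai) * E = E * (A * E * Ai) := by
    have h1 := pow_comm (g * c * g⁻¹) c hgcG hcG
    rw [conj_pow] at h1
    have h2 := congrArg Subtype.val h1
    simp only [Matrix.SpecialLinearGroup.coe_mul, hCd] at h2
    have hsand : A * (1 + E) * Ai = 1 + A * E * Ai := by
      rw [mul_add, mul_one, add_mul, hAAi, mul_assoc]
    rw [hsand] at h2
    exact expand _ _ h2
  have hconjB : (B * E * Bi) * E = E * (B * E * Bi) := by
    have h1 := pow_comm (h * c * h⁻¹) c hhcG hcG
    rw [conj_pow] at h1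
    have h2 := congrArg Subtype.val h1
    simp only [Matrix.SpecialLinearGroup.coe_mul, hCd] at h2
    have hsand : B * (1 + E) * Bi = 1 + B * E * Bi := by
      rw [mul_add, mul_one, add_mul, hBBi, mul_assoc]
    rw [hsand] at h2
    exact expand _ _ h2
  -- trace of conjugates
  have htrconjA : (A * E * Ai).trace = 0 := by
    rw [Matrix.trace_mul_comm, ← mul_assoc, hAiA, one_mul, hEt]
  have htrconjB : (B * E * Bi).trace = 0 := by
    rw [Matrix.trace_mul_comm, ← mul_assoc, hBiB, one_mul, hEt]
  -- commutant lemma gives scalars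
  obtain ⟨s, hs⟩ := Stmt8Aux.commutant E (A * E * Ai) hE2 hEt htrconjA hconjA hEne
  obtain ⟨s', hs'⟩ := Stmt8Aux.commutant E (B * E * Bi) hE2 hEt htrconjB hconjB hEne
  -- A * N = s • (N * A)
  have hAN : A * N = s • (N * A) := by
    have h1 : A * E * Ai * A = (s • E) * A := by rw [hs]
    rw [mul_assoc (A * E) Ai A, hAiA, mul_one, smul_mul_assoc] at h1
    -- h1 : A * E = s • (E * A)
    rw [hEdef, mul_smul_comm, smul_mul_assoc, smul_comm s ((d:ℝ)) (N * A)] at h1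
    exact smul_right_injective _ hd0 h1
  have hBN : B * N = s' • (N * B) := by
    have h1 : B * E * Bi * B = (s' • E) * B := by rw [hs']
    rw [mul_assoc (B * E) Bi B, hBiB, mul_one, smul_mul_assoc] at h1
    rw [hEdef, mul_smul_comm, smul_mul_assoc, smul_comm s' ((d:ℝ)) (N * B)] at h1
    exact smul_right_injective _ hd0 h1
  -- powers
  have hpowA : ∀ k : ℕ, A ^ k * N = s ^ k • (N * A ^ k) := by
    intro k
    induction k with
    | zero => simp
    | succ n ih =>
        rw [pow_succ, pow_succ, mul_assoc, hAN, mul_smul_comm, ← mul_assoc, ih,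
          smul_mul_assoc, smul_smul, mul_assoc, mul_comm (s ^ n) s]
  have hpowB : ∀ k : ℕ, B ^ k * N = s' ^ k • (N * B ^ k) := by
    intro k
    induction k with
    | zero => simp
    | succ n ih =>
        rw [pow_succ, pow_succ, mul_assoc, hBN, mul_smul_comm, ← mul_assoc, ih,
          smul_mul_assoc, smul_smul, mul_assoc, mul_comm (s' ^ n) s']
  -- N * A^d ≠ 0
  have hNAd : N * A ^ d ≠ 0 := by
    intro h0
    apply hNne
    have hcomAAi : Commute A Ai := by unfold Commute SemiconjBy; rw [hAAi, hAiA]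
    have hAdAid : A ^ d * Ai ^ d = 1 := by
      rw [← hcomAAi.mul_pow, hAAi, one_pow]
    calc N = N * (A ^ d * Ai ^ d) := by rw [hAdAid, mul_one]
      _ = (N * A ^ d) * Ai ^ d := by rw [mul_assoc]
      _ = 0 := by rw [h0, zero_mul]
  have hNBd : N * B ^ d ≠ 0 := by
    intro h0
    apply hNne
    have hcomBBi : Commute B Bi := by unfold Commute SemiconjBy; rw [hBBi, hBiB]
    have hBdBid : B ^ d * Bi ^ d = 1 := by
      rw [← hcomBBi.mul_pow, hBBi, one_pow]
    calc N = N * (B ^ d * Bi ^ d) := by rw [hBdBid, mul_one]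
      _ = (N * B ^ d) * Bi ^ d := by rw [mul_assoc]
      _ = 0 := by rw [h0, zero_mul]
  -- s ^ d = 1
  have hsd : s ^ d = 1 := by
    have h1 : s ^ d • (N * A ^ d) = N * A ^ d := by rw [← hpowA d, hAdE]
    have h2 : (s ^ d - 1) • (N * A ^ d) = 0 := by
      rw [sub_smul, one_smul, h1, sub_self]
    rcases smul_eq_zero.mp h2 with h | h
    · linarith [sub_eq_zero.mp (by linarith [h] : s ^ d - 1 = 0)]
    · exact absurd h hNAd
  have hs'd : s' ^ d = 1 := by
    have h1 : s' ^ d • (N * B ^ d) = N * B ^ d := by rw [← hpowB d, hBdE]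
    have h2 : (s' ^ d - 1) • (N * B ^ d) = 0 := by
      rw [sub_smul, one_smul, h1, sub_self]
    rcases smul_eq_zero.mp h2 with h | h
    · linarith
    · exact absurd h hNBd
  -- s = ± 1
  have sq_one : ∀ x : ℝ, x ^ d = 1 → x = 1 ∨ x = -1 := by
    intro x hx
    have hx2 : (x ^ 2) ^ d = 1 := by
      rw [← pow_mul, mul_comm 2 d, pow_mul, hx, one_pow]
    have hx2' : x ^ 2 = 1 := by
      rcases lt_trichotomy (x ^ 2) 1 with hlt | heq | hgt
      · exfalso
        have := pow_lt_one₀ (sq_nonneg x) hlt hdpos.ne'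
        rw [hx2] at this; exact lt_irrefl 1 this
      · exact heq
      · exfalso
        have := one_lt_pow₀ hgt hdpos.ne'
        rw [hx2] at this; exact lt_irrefl 1 this
    have : (x - 1) * (x + 1) = 0 := by nlinarith [hx2']
    rcases mul_eq_zero.mp this with h | h
    · left; linarith
    · right; linarith
  -- the commutator relation at matrix level
  have hcMat : A * B = B * A + N * (B * A) := by
    have h1 : g * h = c * (h * g) := by rw [hcdef]; group
    have h2 := congrArg Subtype.val h1
    simp only [Matrix.SpecialLinearGroup.coe_mul] at h2
    rw [← hAdef, ← hBdef, ← hCdef] at h2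
    rw [h2, hC1N, add_mul, one_mul]
  exact Stmt8Aux.key A B N s s' (sq_one s hsd) (sq_one s' hs'd) hdetA hdetB hN2 hNt hNne
    hAN hBN hcMat
end

section
/- Let (x,y,z) ∈ ℝ³ satisfy x² + y² + z² − xyz > 4, and suppose (x,y,z) ∉ V, i.e. it is not the case that two of the coordinates are 0 and the third has absolute value greater than 2. Then under the equivalence relation on ℝ³ generated by permutations of the coordinates and the moves (x,y,z) ∼ (x,y,xy−z) and (x,y,z) ∼ (−x,−y,z), the triple (x,y,z) is equivalent to some (x',y',z') with x' > 2, y' > 2 and z' > 2. -/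
/-- The basic moves on triples of reals: transpositions of coordinates (which
generate all permutations of the coordinates), the Markoff move
`(x,y,z) ↦ (x,y,xy−z)`, and the sign change `(x,y,z) ↦ (−x,−y,z)`. -/
def markoffSignMove : ℝ × ℝ × ℝ → ℝ × ℝ × ℝ → Prop := fun p q =>
  q = (p.2.1, p.1, p.2.2) ∨
  q = (p.1, p.2.2, p.2.1) ∨
  q = (p.1, p.2.1, p.1 * p.2.1 - p.2.2) ∨
  q = (-p.1, -p.2.1, p.2.2)

namespace MarkoffAux

abbrev Reach : ℝ × ℝ × ℝ → ℝ × ℝ × ℝ → Prop := Relation.EqvGen markoffSignMove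

lemma reach_swap12 (x y z : ℝ) : Reach (x,y,z) (y,x,z) :=
  Relation.EqvGen.rel _ _ (Or.inl rfl)
lemma reach_swap23 (x y z : ℝ) : Reach (x,y,z) (x,z,y) :=
  Relation.EqvGen.rel _ _ (Or.inr (Or.inl rfl))
lemma reach_mz (x y z : ℝ) : Reach (x,y,z) (x,y,x*y-z) :=
  Relation.EqvGen.rel _ _ (Or.inr (Or.inr (Or.inl rfl)))
lemma reach_sign (x y z : ℝ) : Reach (x,y,z) (-x,-y,z) :=
  Relation.EqvGen.rel _ _ (Or.inr (Or.inr (Or.inr rfl)))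

lemma reach_trans {p q r} (h1 : Reach p q) (h2 : Reach q r) : Reach p r :=
  Relation.EqvGen.trans _ _ _ h1 h2

lemma reach_my (x y z : ℝ) : Reach (x,y,z) (x, x*z-y, z) :=
  reach_trans (reach_swap23 x y z) (reach_trans (reach_mz x z y) (reach_swap23 x z (x*z-y)))

lemma reach_mx (x y z : ℝ) : Reach (x,y,z) (y*z-x, y, z) := by
  refine reach_trans (reach_swap12 x y z) (reach_trans (reach_swap23 y x z)
    (reach_trans (reach_mz y z x) (reach_trans (reach_swap23 y z (y*z-x)) (reach_swap12 y (y*z-x) z))))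

lemma reach_swap13 (x y z : ℝ) : Reach (x,y,z) (z,y,x) :=
  reach_trans (reach_swap23 x y z) (reach_trans (reach_swap12 x z y) (reach_swap23 z x y))

/-- the set of triples with (at least) two zero coordinates -/
def Z2 (p : ℝ × ℝ × ℝ) : Prop :=
  (p.1 = 0 ∧ p.2.1 = 0) ∨ (p.1 = 0 ∧ p.2.2 = 0) ∨ (p.2.1 = 0 ∧ p.2.2 = 0)

lemma Z2_move {p q} (h : markoffSignMove p q) : Z2 p ↔ Z2 q := by
  obtain ⟨x, y, z⟩ := p
  rcases h with h | h | h | h <;> subst h <;> simp only [Z2] <;>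
    constructor <;> rintro (⟨h1, h2⟩ | ⟨h1, h2⟩ | ⟨h1, h2⟩) <;> simp_all

lemma Z2_reach {p q} (h : Reach p q) : Z2 p ↔ Z2 q := by
  induction h with
  | rel a b hab => exact Z2_move hab
  | refl a => exact Iff.rfl
  | symm a b hab ih => exact ih.symm
  | trans a b c h1 h2 ih1 ih2 => exact ih1.trans ih2

/- ### The key inequalities -/

lemma caseA (X Y Z : ℝ) (h0 : 0 ≤ Z) (h1 : Z ≤ Y) (h2 : Y ≤ X) (h3 : X ≤ 2)
    (h : X^2*Y^2 ≤ 2*(X*Y*Z)) : X^2+Y^2+Z^2 - X*Y*Z ≤ 4 := by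
  rcases eq_or_lt_of_le (mul_nonneg (le_trans h0 (h1.trans h2)) (h0.trans h1) : (0:ℝ) ≤ X*Y) with he | hpos
  · have hY : Y = 0 := by
      rcases mul_eq_zero.1 he.symm with hX | hY
      · linarith
      · exact hY
    have hZ : Z = 0 := le_antisymm (hY ▸ h1) h0
    nlinarith
  · have hXY : X*Y ≤ 2*Z := by
      have := (mul_le_mul_iff_right₀ hpos).1 (by nlinarith : X*Y*(X*Y) ≤ X*Y*(2*Z))
      linarith
    have t2 : 0 ≤ (Y - Z) * (Y + Z - X*Y) := by
      apply mul_nonneg <;> nlinarith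
    have t1 : 0 ≤ (2 - X) * (X + 2 - Y^2) := by
      apply mul_nonneg <;> nlinarith
    nlinarith [t1, t2]

lemma caseB (X Y Z : ℝ) (h0 : 0 ≤ Z) (h1 : Z ≤ Y) (h2 : Y ≤ X) (h3 : X ≤ 2)
    (h : 2*(X*Y*Z) ≤ X^2*Y^2) : X^2+Y^2+Z^2 + X*Y*Z - X^2*Y^2 ≤ 4 := by
  rcases eq_or_lt_of_le (mul_nonneg (le_trans h0 (h1.trans h2)) (h0.trans h1) : (0:ℝ) ≤ X*Y) with he | hpos
  · have hY : Y = 0 := by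
      rcases mul_eq_zero.1 he.symm with hX | hY
      · linarith
      · exact hY
    have hZ : Z = 0 := le_antisymm (hY ▸ h1) h0
    nlinarith
  · have hXY : 2*Z ≤ X*Y := by
      have := (mul_le_mul_iff_right₀ hpos).1 (by nlinarith : X*Y*(2*Z) ≤ X*Y*(X*Y))
      linarith
    have t4 : 0 ≤ (X*Y/2 - Z) * (X*Y/2 + Z + X*Y) := by
      apply mul_nonneg <;> nlinarith
    have t5 : 0 ≤ (4 - X^2) * (4 - Y^2) := by
      apply mul_nonneg <;> nlinarith
    nlinarith [t4, t5]

lemma claimE (X Y Z : ℝ) (h0 : 0 ≤ Z) (h1 : Z ≤ Y) (h2 : Y ≤ X) (h3 : X ≤ 2) :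
    X^2+Y^2+Z^2 - X^2*Y^2 ≤ 4 := by
  have hZY : Z^2 ≤ Y^2 := by nlinarith
  rcases le_or_gt Y 1 with hY | hY
  · nlinarith [mul_nonneg (by nlinarith : (0:ℝ) ≤ 4 - X^2) (by nlinarith : (0:ℝ) ≤ 1 - Y^2)]
  · nlinarith [mul_nonneg (by nlinarith : (0:ℝ) ≤ X^2 - Y^2) (by nlinarith : (0:ℝ) ≤ Y^2 - 1),
      sq_nonneg (Y^2 - 3/2)]

lemma Fcore (X Y Z e : ℝ) (h0 : 0 ≤ Z) (o1 : Z ≤ Y) (o2 : Y ≤ X) (h3 : X ≤ 2)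
    (he : 0 ≤ e) (h1 : X^2*Y^2 - 2*(X*Y*Z) ≤ e) : X^2+Y^2+Z^2 - X*Y*Z ≤ 4 + e := by
  rcases le_total (X^2*Y^2) (2*(X*Y*Z)) with h | h
  · have := caseA X Y Z h0 o1 o2 h3 h; linarith
  · have := caseB X Y Z h0 o1 o2 h3 h; linarith

lemma Fcore_neg (X Y Z e : ℝ) (h0 : 0 ≤ Z) (o1 : Z ≤ Y) (o2 : Y ≤ X) (h3 : X ≤ 2)
    (he : 0 ≤ e) (h1 : X^2*Y^2 + 2*(X*Y*Z) ≤ e) : X^2+Y^2+Z^2 + X*Y*Z ≤ 4 + e := by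
  have hE := claimE X Y Z h0 o1 o2 h3
  have hP : 0 ≤ X*Y*Z := mul_nonneg (mul_nonneg (by linarith) (by linarith)) h0
  linarith

lemma Fmain (x y z e : ℝ) (he : 0 ≤ e) (o1 : |z| ≤ |y|) (o2 : |y| ≤ |x|) (hx2 : |x| ≤ 2)
    (h1 : x^2*y^2 - 2*(x*y*z) ≤ e) : x^2+y^2+z^2 - x*y*z ≤ 4 + e := by
  have e1 : x^2 = |x|^2 := (sq_abs x).symm
  have e2 : y^2 = |y|^2 := (sq_abs y).symm
  have e3 : z^2 = |z|^2 := (sq_abs z).symm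
  have habs : |x*y*z| = |x| * |y| * |z| := by rw [abs_mul, abs_mul]
  rcases le_or_gt 0 (x*y*z) with hp | hp
  · have hq : x*y*z = |x| * |y| * |z| := by rw [← habs, abs_of_nonneg hp]
    have hc := Fcore |x| |y| |z| e (abs_nonneg z) o1 o2 hx2 he (by nlinarith)
    nlinarith
  · have hq : x*y*z = -(|x| * |y| * |z|) := by rw [← habs, abs_of_neg hp]; ring
    have hc := Fcore_neg |x| |y| |z| e (abs_nonneg z) o1 o2 hx2 he (by nlinarith)
    nlinarith

/-- in the box with `κ > 4`, some Markoff move strictly increases the sum of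
squares by at least `(k-4)/2` -/
lemma step (x y z k : ℝ) (hk : x^2+y^2+z^2 - x*y*z = k) (h4 : 4 < k)
    (b1 : |x| ≤ 2) (b2 : |y| ≤ 2) (b3 : |z| ≤ 2) :
    (((k-4)/2 < x^2*y^2 - 2*(x*y*z)) ∨ ((k-4)/2 < x^2*z^2 - 2*(x*y*z)) ∨
      ((k-4)/2 < y^2*z^2 - 2*(x*y*z))) := by
  have he : (0:ℝ) ≤ (k-4)/2 := by linarith
  rcases le_total |x| |y| with oxy | oxy
  · rcases le_total |y| |z| with oyz | oyz
    · refine Or.inr (Or.inr ?_)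
      by_contra h; push_neg at h
      have := Fmain z y x ((k-4)/2) he oxy oyz b3 (by nlinarith)
      nlinarith
    · rcases le_total |x| |z| with oxz | oxz
      · refine Or.inr (Or.inr ?_)
        by_contra h; push_neg at h
        have := Fmain y z x ((k-4)/2) he oxz oyz b2 (by nlinarith)
        nlinarith
      · refine Or.inl ?_
        by_contra h; push_neg at h
        have := Fmain y x z ((k-4)/2) he oxz oxy b2 (by nlinarith)
        nlinarith
  · rcases le_total |x| |z| with oxz | oxz
    · refine Or.inr (Or.inl ?_)
      by_contra h; push_neg at h
      have := Fmain z x y ((k-4)/2) he oxy oxz b3 (by nlinarith)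
      nlinarith
    · rcases le_total |y| |z| with oyz | oyz
      · refine Or.inr (Or.inl ?_)
        by_contra h; push_neg at h
        have := Fmain x z y ((k-4)/2) he oyz oxz b1 (by nlinarith)
        nlinarith
      · refine Or.inl ?_
        by_contra h; push_neg at h
        have := Fmain x y z ((k-4)/2) he oyz oxy b1 (by nlinarith)
        nlinarith

lemma escape_aux (k : ℝ) (h4 : 4 < k) : ∀ n : ℕ, ∀ x y z : ℝ,
    (x^2+y^2+z^2 - x*y*z = k) → (12 : ℝ) < x^2+y^2+z^2 + n*((k-4)/2) →
    ∃ u v w : ℝ, Reach (x,y,z) (u,v,w) ∧ (2 < |u| ∨ 2 < |v| ∨ 2 < |w|) := by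
  intro n
  induction n with
  | zero =>
    intro x y z hk hf
    refine ⟨x, y, z, Relation.EqvGen.refl _, ?_⟩
    by_contra h
    push_neg at h
    obtain ⟨h1, h2, h3⟩ := h
    have e1 : x^2 ≤ 4 := by nlinarith [sq_abs x, abs_nonneg x]
    have e2 : y^2 ≤ 4 := by nlinarith [sq_abs y, abs_nonneg y]
    have e3 : z^2 ≤ 4 := by nlinarith [sq_abs z, abs_nonneg z]
    push_cast at hf
    linarith
  | succ n ih =>
    intro x y z hk hf
    by_cases b1 : |x| ≤ 2
    · by_cases b2 : |y| ≤ 2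
      · by_cases b3 : |z| ≤ 2
        · have e1 : x^2 ≤ 4 := by nlinarith [sq_abs x, abs_nonneg x]
          have e2 : y^2 ≤ 4 := by nlinarith [sq_abs y, abs_nonneg y]
          have e3 : z^2 ≤ 4 := by nlinarith [sq_abs z, abs_nonneg z]
          have hγ : (0:ℝ) < (k-4)/2 := by linarith
          push_cast at hf
          rcases step x y z k hk h4 b1 b2 b3 with hg | hg | hg
          · obtain ⟨u, v, w, hr, hp⟩ := ih x y (x*y - z)
              (by linear_combination hk) (by push_cast; nlinarith)
            exact ⟨u, v, w, Relation.EqvGen.trans _ _ _ (reach_mz x y z) hr, hp⟩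
          · obtain ⟨u, v, w, hr, hp⟩ := ih x (x*z - y) z
              (by linear_combination hk) (by push_cast; nlinarith)
            exact ⟨u, v, w, Relation.EqvGen.trans _ _ _ (reach_my x y z) hr, hp⟩
          · obtain ⟨u, v, w, hr, hp⟩ := ih (y*z - x) y z
              (by linear_combination hk) (by push_cast; nlinarith)
            exact ⟨u, v, w, Relation.EqvGen.trans _ _ _ (reach_mx x y z) hr, hp⟩
        · exact ⟨x, y, z, Relation.EqvGen.refl _, Or.inr (Or.inr (by linarith))⟩
      · exact ⟨x, y, z, Relation.EqvGen.refl _, Or.inr (Or.inl (by linarith))⟩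
    · exact ⟨x, y, z, Relation.EqvGen.refl _, Or.inl (by linarith)⟩

lemma escape (k x y z : ℝ) (h4 : 4 < k) (hk : x^2+y^2+z^2 - x*y*z = k) :
    ∃ u v w : ℝ, Reach (x,y,z) (u,v,w) ∧ (2 < |u| ∨ 2 < |v| ∨ 2 < |w|) := by
  have hγ : (0:ℝ) < (k-4)/2 := by linarith
  obtain ⟨n, hn⟩ := exists_nat_gt ((12 - (x^2+y^2+z^2))/((k-4)/2))
  refine escape_aux k h4 n x y z hk ?_
  have := (div_lt_iff₀ hγ).1 hn
  linarith

/- ### Growth along a hyperbolic coordinate -/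

lemma reach_R (a b t : ℝ) : Reach (a,b,t) (b, b*t-a, t) :=
  reach_trans (reach_swap12 a b t) (reach_my b a t)

lemma grow_aux (t : ℝ) (ht : 2 < t) : ∀ n : ℕ, ∀ a b : ℝ, 0 ≤ a → a ≤ b → 0 < b →
    2 < (t-1)^n * b → ∃ u v : ℝ, Reach (a,b,t) (u,v,t) ∧ 2 < u ∧ 2 < v := by
  intro n
  induction n with
  | zero =>
    intro a b h0 hab hb h2
    simp at h2
    exact ⟨b, b*t-a, reach_R a b t, h2, by nlinarith⟩
  | succ n ih =>
    intro a b h0 hab hb h2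
    have hb' : b ≤ b*t-a := by nlinarith
    have h2' : 2 < (t-1)^n * (b*t-a) := by
      have hp : (0:ℝ) < (t-1)^n := pow_pos (by linarith) n
      have : (t-1)^(n+1) * b = (t-1)^n * ((t-1)*b) := by ring
      nlinarith [mul_le_mul_of_nonneg_left (by nlinarith : (t-1)*b ≤ b*t-a) (le_of_lt hp)]
    obtain ⟨u, v, hr, hu, hv⟩ := ih b (b*t-a) (le_of_lt hb) hb' (by nlinarith) h2'
    exact ⟨u, v, reach_trans (reach_R a b t) hr, hu, hv⟩

lemma grow_pos (t a b : ℝ) (ht : 2 < t) (h0 : 0 ≤ a) (hab : a ≤ b) (hb : 0 < b) :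
    ∃ u v : ℝ, Reach (a,b,t) (u,v,t) ∧ 2 < u ∧ 2 < v := by
  obtain ⟨n, hn⟩ := pow_unbounded_of_one_lt (2/b) (by linarith : (1:ℝ) < t-1)
  exact grow_aux t ht n a b h0 hab hb (by have := (div_lt_iff₀ hb).1 hn; linarith)

lemma grow_any (t a b : ℝ) (ht : 2 < t) (h : 0 < a ∨ 0 < b) :
    ∃ u v : ℝ, Reach (a,b,t) (u,v,t) ∧ 2 < u ∧ 2 < v := by
  rcases le_total a b with hab | hab
  · have hb : 0 < b := h.elim (fun h1 => lt_of_lt_of_le h1 hab) id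
    obtain ⟨u, v, hr, hu, hv⟩ := grow_pos t b (b*t-a) ht (le_of_lt hb) (by nlinarith) (by nlinarith)
    exact ⟨u, v, reach_trans (reach_R a b t) hr, hu, hv⟩
  · have ha : 0 < a := h.elim id (fun h1 => lt_of_lt_of_le h1 hab)
    obtain ⟨u, v, hr, hu, hv⟩ := grow_pos t a (a*t-b) ht (le_of_lt ha) (by nlinarith) (by nlinarith)
    exact ⟨u, v, reach_trans (reach_trans (reach_swap12 a b t) (reach_R b a t)) hr, hu, hv⟩

lemma grow (t a b : ℝ) (ht : 2 < t) (hab : ¬(a = 0 ∧ b = 0)) :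
    ∃ u v : ℝ, Reach (a,b,t) (u,v,t) ∧ 2 < u ∧ 2 < v := by
  by_cases ha : 0 < a
  · exact grow_any t a b ht (Or.inl ha)
  · by_cases hb : 0 < b
    · exact grow_any t a b ht (Or.inr hb)
    · push_neg at ha hb
      have h : 0 < -a ∨ 0 < -b := by
        rcases lt_or_eq_of_le ha with h | h
        · exact Or.inl (by linarith)
        · rcases lt_or_eq_of_le hb with h' | h'
          · exact Or.inr (by linarith)
          · exact absurd ⟨h, h'⟩ hab
      obtain ⟨u, v, hr, hu, hv⟩ := grow_any t (-a) (-b) ht h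
      exact ⟨u, v, reach_trans (reach_sign a b t) hr, hu, hv⟩

/-- sign-fix and grow: from a point whose third coordinate exceeds 2 in absolute
value and which does not have its two other coordinates both zero, reach the
target region -/
lemma finish (a b t : ℝ) (ht : 2 < |t|) (hab : ¬(a = 0 ∧ b = 0)) :
    ∃ x' y' z' : ℝ, Reach (a,b,t) (x',y',z') ∧ 2 < x' ∧ 2 < y' ∧ 2 < z' := by
  rcases lt_abs.1 ht with h2 | h2
  · obtain ⟨u, v, hr, hu, hv⟩ := grow t a b h2 hab
    exact ⟨u, v, t, hr, hu, hv, h2⟩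
  · -- t < -2 : flip the sign of t (and b)
    have hr0 : Reach (a,b,t) (a,-b,-t) :=
      reach_trans (reach_swap13 a b t)
        (reach_trans (reach_sign t b a) (reach_swap13 (-t) (-b) a))
    obtain ⟨u, v, hr, hu, hv⟩ := grow (-t) a (-b) (by linarith) (by
      rintro ⟨h1', h2'⟩
      exact hab ⟨h1', by linarith [neg_eq_zero.1 h2']⟩)
    exact ⟨u, v, -t, reach_trans hr0 hr, hu, hv, by linarith⟩

end MarkoffAux

open MarkoffAux in
/-- If `x² + y² + z² − xyz > 4` and `(x,y,z)` is not in `V` (two coordinates zero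
and the third of absolute value `> 2`), then under the equivalence relation
generated by permutations of coordinates, the Markoff move
`(x,y,z) ∼ (x,y,xy−z)` and the sign change `(x,y,z) ∼ (−x,−y,z)`, the triple
`(x,y,z)` is equivalent to some triple all of whose entries exceed `2`. -/
theorem stmt9 (x y z : ℝ) (hk : 4 < x ^ 2 + y ^ 2 + z ^ 2 - x * y * z)
    (hV : ¬ ((x = 0 ∧ y = 0 ∧ 2 < |z|) ∨ (x = 0 ∧ z = 0 ∧ 2 < |y|) ∨
             (y = 0 ∧ z = 0 ∧ 2 < |x|))) :
    ∃ x' y' z' : ℝ, Relation.EqvGen markoffSignMove (x, y, z) (x', y', z') ∧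
      2 < x' ∧ 2 < y' ∧ 2 < z' := by
  -- the starting point does not have two zero coordinates
  have hZ2 : ¬ Z2 (x, y, z) := by
    rintro (⟨h1, h2⟩ | ⟨h1, h2⟩ | ⟨h1, h2⟩)
    · subst h1; subst h2
      refine hV (Or.inl ⟨rfl, rfl, ?_⟩)
      by_contra hle; push_neg at hle
      nlinarith [sq_abs z, abs_nonneg z]
    · subst h1; subst h2
      refine hV (Or.inr (Or.inl ⟨rfl, rfl, ?_⟩))
      by_contra hle; push_neg at hle
      nlinarith [sq_abs y, abs_nonneg y]
    · subst h1; subst h2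
      refine hV (Or.inr (Or.inr ⟨rfl, rfl, ?_⟩))
      by_contra hle; push_neg at hle
      nlinarith [sq_abs x, abs_nonneg x]
  -- escape the box
  obtain ⟨u, v, w, hr1, hbig⟩ :=
    escape (x^2+y^2+z^2 - x*y*z) x y z hk rfl
  -- move the big coordinate to the third position
  have key : ∀ a b t : ℝ, Reach (x,y,z) (a,b,t) → 2 < |t| →
      ∃ x' y' z' : ℝ, Reach (x,y,z) (x',y',z') ∧ 2 < x' ∧ 2 < y' ∧ 2 < z' := by
    intro a b t hr ht
    have hZ2' : ¬ Z2 (a,b,t) := fun h => hZ2 ((Z2_reach hr).2 h)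
    obtain ⟨x', y', z', hr2, h1, h2, h3⟩ := finish a b t ht (fun ⟨ha, hb⟩ =>
      hZ2' (Or.inl ⟨ha, hb⟩))
    exact ⟨x', y', z', reach_trans hr hr2, h1, h2, h3⟩
  rcases hbig with hb | hb | hb
  · exact key v w u (reach_trans hr1 (by
      exact reach_trans (reach_swap13 u v w) (reach_swap12 w v u))) hb
  · exact key u w v (reach_trans hr1 (reach_swap23 u v w)) hb
  · exact key u v w hr1 hb
end

section
/- Let F₂ be the free group on two generators a, b, let ρ : F₂ → SL(2,ℝ) be a homomorphism with g = ρ(a), h = ρ(b), and suppose Tr(g·h·g⁻¹·h⁻¹) > 2 and the subgroup of SL(2,ℝ) generated by g and h is not virtually abelian. Then there exist an automorphism φ of F₂ and signs ε, δ ∈ {1, −1} such that ε·Tr(ρ(φ(a))) > 2, δ·Tr(ρ(φ(b))) > 2, and ε·δ·Tr(ρ(φ(a·b))) > 2. (That is, after a change of free basis of F₂ and a choice of lifts to SL(2,ℝ), all three traces can be made greater than 2.) -/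
abbrev SL2 := Matrix.SpecialLinearGroup (Fin 2) ℝ
abbrev F2 := FreeGroup (Fin 2)

instance : Fact (Even (Fintype.card (Fin 2))) := ⟨⟨1, by norm_num⟩⟩

lemma trSL_mul_comm (a b : SL2) : trSL (a*b) = trSL (b*a) := by
  simp only [trSL, Matrix.SpecialLinearGroup.coe_mul]
  exact Matrix.trace_mul_comm _ _

lemma trSL_one : trSL 1 = 2 := by
  simp [trSL, Matrix.trace_fin_two]

lemma trSL_inv (a : SL2) : trSL a⁻¹ = trSL a := by
  simp only [trSL, Matrix.SpecialLinearGroup.coe_inv, Matrix.adjugate_fin_two,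
    Matrix.trace_fin_two]
  simp [Matrix.trace_fin_two]
  ring

lemma trSL_fricke (a b : SL2) : trSL (a * b⁻¹) = trSL a * trSL b - trSL (a*b) := by
  simp only [trSL, Matrix.SpecialLinearGroup.coe_inv, Matrix.SpecialLinearGroup.coe_mul,
    Matrix.adjugate_fin_two, Matrix.trace_fin_two, Matrix.mul_apply, Fin.sum_univ_two]
  simp [Matrix.cons_val_zero, Matrix.cons_val_one]
  ring

lemma trSL_conj (a b : SL2) : trSL (a * b * a⁻¹) = trSL b := by
  rw [trSL_mul_comm]
  group

lemma trSL_sq (a : SL2) : trSL (a*a) = trSL a ^ 2 - 2 := by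
  have := trSL_fricke a a
  simp [trSL_one] at this
  nlinarith [this]

lemma trSL_commutator (g h : SL2) :
    trSL (g*h*g⁻¹*h⁻¹) =
      trSL g ^2 + trSL h ^2 + trSL (g*h) ^2 - trSL g * trSL h * trSL (g*h) - 2 := by
  set x := trSL g; set y := trSL h; set z := trSL (g*h)
  have e1 : trSL (g*h*g⁻¹*h⁻¹) = z * trSL (h*g) - trSL ((g*h)*(h*g)) := by
    have := trSL_fricke (g*h) (h*g)
    rw [show (g*h) * (h*g)⁻¹ = g*h*g⁻¹*h⁻¹ by group] at this
    rw [this]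
  have e2 : trSL (h*g) = z := by rw [trSL_mul_comm]
  have e3 : trSL ((g*h)*(h*g)) = trSL (g*(g*(h*h))) := by
    rw [trSL_mul_comm]
    rw [show h*g*(g*h) = h * (g*(g*(h*h))) * h⁻¹ by group, trSL_conj]
  have e4 : trSL (g*(g*(h*h))) = x * trSL (g*(h*h)) - (y^2 - 2) := by
    have t := trSL_fricke g (g*(h*h))
    rw [show g * (g*(h*h))⁻¹ = g * (h*h)⁻¹ * g⁻¹ by group] at t
    rw [trSL_conj, trSL_inv, trSL_sq] at t
    linarith [t]
  have e5 : trSL (g*(h*h)) = z * y - x := by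
    have t := trSL_fricke (g*h) h
    rw [show g*h*h⁻¹ = g * 1 by group, mul_one] at t
    rw [show g*h*h = g*(h*h) by group] at t
    linarith [t]
  rw [e1, e2, e3, e4, e5]; ring

lemma commute_aux (M A B : Matrix (Fin 2) (Fin 2) ℝ)
    (hq0 : M 0 1 ≠ 0) (hA : A*M = M*A) (hB : B*M = M*B) : A*B = B*A := by
  set p := M 0 0; set q := M 0 1; set r := M 1 0; set s := M 1 1
  set a := A 0 0; set b := A 0 1; set c := A 1 0; set d := A 1 1
  set e := B 0 0; set f := B 0 1; set u := B 1 0; set v := B 1 1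
  have EA : ∀ i j, (A*M) i j = (M*A) i j := fun i j => by rw [hA]
  have EB : ∀ i j, (B*M) i j = (M*B) i j := fun i j => by rw [hB]
  have A00 := EA 0 0; have A01 := EA 0 1
  have B00 := EB 0 0; have B01 := EB 0 1
  simp only [Matrix.mul_apply, Fin.sum_univ_two] at A00 A01 B00 B01
  have h2 : q*c = b*r := by linear_combination -A00
  have h1 : q*(a-d) = b*(p-s) := by linear_combination A01
  have h4 : q*u = f*r := by linear_combination -B00
  have h3 : q*(e-v) = f*(p-s) := by linear_combination B01
  have key : ∀ X Y : ℝ, q*(X-Y) = 0 → X = Y := by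
    intro X Y hXY
    rcases mul_eq_zero.mp hXY with h|h
    · exact absurd h hq0
    · linarith
  have key2 : ∀ X Y : ℝ, q^2*(X-Y) = 0 → X = Y := by
    intro X Y hXY
    rcases mul_eq_zero.mp hXY with h|h
    · exact absurd h (pow_ne_zero 2 hq0)
    · linarith
  ext i j
  fin_cases i <;> fin_cases j <;> simp only [Matrix.mul_apply, Fin.sum_univ_two, Fin.zero_eta, Fin.mk_one]
  · exact key _ _ (by linear_combination b*h4 - f*h2)
  · exact key _ _ (by linear_combination f*h1 - b*h3)
  · exact key2 _ _ (by linear_combination (q*(e-v))*h2 + (b*r)*h3 - (q*(a-d))*h4 - (f*r)*h1)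
  · exact key _ _ (by linear_combination f*h2 - b*h4)

lemma commute_of_commute_nonscalar (M A B : Matrix (Fin 2) (Fin 2) ℝ)
    (hM : ¬(M 0 1 = 0 ∧ M 1 0 = 0 ∧ M 0 0 = M 1 1))
    (hA : A*M = M*A) (hB : B*M = M*B) : A*B = B*A := by
  by_cases hq0 : M 0 1 = 0
  · by_cases hr0 : M 1 0 = 0
    · -- diagonal case
      have hps : M 0 0 ≠ M 1 1 := fun hps => hM ⟨hq0, hr0, hps⟩
      have EA : ∀ i j, (A*M) i j = (M*A) i j := fun i j => by rw [hA]
      have EB : ∀ i j, (B*M) i j = (M*B) i j := fun i j => by rw [hB]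
      have A01 := EA 0 1; have A10 := EA 1 0
      have B01 := EB 0 1; have B10 := EB 1 0
      simp only [Matrix.mul_apply, Fin.sum_univ_two, hq0, hr0] at A01 A10 B01 B10
      have hb : A 0 1 = 0 := by
        rcases mul_eq_zero.mp (show A 0 1 * (M 0 0 - M 1 1) = 0 by linear_combination -A01) with h|h
        · exact h
        · exact absurd (by linarith) hps
      have hc : A 1 0 = 0 := by
        rcases mul_eq_zero.mp (show A 1 0 * (M 0 0 - M 1 1) = 0 by linear_combination A10) with h|h
        · exact h
        · exact absurd (by linarith) hps
      have hf : B 0 1 = 0 := by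
        rcases mul_eq_zero.mp (show B 0 1 * (M 0 0 - M 1 1) = 0 by linear_combination -B01) with h|h
        · exact h
        · exact absurd (by linarith) hps
      have hu : B 1 0 = 0 := by
        rcases mul_eq_zero.mp (show B 1 0 * (M 0 0 - M 1 1) = 0 by linear_combination B10) with h|h
        · exact h
        · exact absurd (by linarith) hps
      ext i j
      fin_cases i <;> fin_cases j <;> simp only [Matrix.mul_apply, Fin.sum_univ_two, Fin.zero_eta, Fin.mk_one, hb, hc, hf, hu] <;> ring
    · -- transpose trick
      have := commute_aux M.transpose A.transpose B.transpose
        (by simpa using hr0)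
        (by rw [← Matrix.transpose_mul, ← Matrix.transpose_mul, hA])
        (by rw [← Matrix.transpose_mul, ← Matrix.transpose_mul, hB])
      have h2 : (B*A).transpose = (A*B).transpose := by
        rw [Matrix.transpose_mul, Matrix.transpose_mul, this]
      exact (Matrix.transpose_inj.mp h2).symm
  · exact commute_aux M A B hq0 hA hB

lemma sq_eq_neg_one (a : SL2) (h : trSL a = 0) : a * a = -1 := by
  have hd : Matrix.det (a : Matrix (Fin 2) (Fin 2) ℝ) = 1 := a.2
  rw [Matrix.det_fin_two] at hd
  simp only [trSL, Matrix.trace_fin_two] at h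
  ext i j
  rw [Matrix.SpecialLinearGroup.coe_mul, Matrix.SpecialLinearGroup.coe_neg,
    Matrix.SpecialLinearGroup.coe_one]
  fin_cases i <;> fin_cases j <;>
      simp [Matrix.mul_apply, Fin.sum_univ_two]
  · linear_combination (a : Matrix (Fin 2) (Fin 2) ℝ) 0 0 * h - hd
  · linear_combination (a : Matrix (Fin 2) (Fin 2) ℝ) 0 1 * h
  · linear_combination (a : Matrix (Fin 2) (Fin 2) ℝ) 1 0 * h
  · linear_combination (a : Matrix (Fin 2) (Fin 2) ℝ) 1 1 * h - hd

lemma trSL_neg (a : SL2) : trSL (-a) = -trSL a := by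
  simp [trSL, Matrix.SpecialLinearGroup.coe_neg]

lemma trSL_mul_comm' (a b : SL2) : trSL (a*b) = trSL (b*a) := by
  simp only [trSL, Matrix.SpecialLinearGroup.coe_mul]
  exact Matrix.trace_mul_comm _ _

lemma trSL_conj' (a b : SL2) : trSL (a * b * a⁻¹) = trSL b := by
  rw [trSL_mul_comm']
  group

lemma va_dihedral (g' h' : SL2) (hx : 2 < |trSL g'|)
    (hy : trSL h' = 0) (hz : trSL (g'*h') = 0) :
    IsVirtuallyAbelian ↥(Subgroup.closure ({g',h'} : Set SL2)) := by
  set k := g' * h' with hk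
  set m := h' * k with hm
  have hh2 : h' * h' = -1 := sq_eq_neg_one _ hy
  have hk2 : k * k = -1 := sq_eq_neg_one _ hz
  have hhi : h'⁻¹ = -h' := by
    rw [eq_comm, eq_inv_iff_mul_eq_one, neg_mul, hh2, neg_neg]
  have hki : k⁻¹ = -k := by
    rw [eq_comm, eq_inv_iff_mul_eq_one, neg_mul, hk2, neg_neg]
  have hmi : m⁻¹ = k * h' := by
    rw [hm, mul_inv_rev, hhi, hki, neg_mul_neg]
  -- trace of m
  have htm : |trSL m| = |trSL g'| := by
    have e : -(h' * g' * h'⁻¹) = m := by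
      rw [hhi, mul_neg, neg_neg, hm, hk, mul_assoc]
    rw [← e, trSL_neg, trSL_conj', abs_neg]
  have hm1 : m ≠ 1 := by
    intro h; rw [h] at htm
    have : trSL (1 : SL2) = 2 := by simp [trSL, Matrix.trace_fin_two]
    rw [this] at htm; rw [← htm] at hx; norm_num at hx
  have hmn1 : m ≠ -1 := by
    intro h; rw [h] at htm
    have : trSL (-1 : SL2) = -2 := by
      rw [trSL_neg]; simp [trSL, Matrix.trace_fin_two]
    rw [this] at htm; rw [← htm] at hx; norm_num at hx
  -- m is nonscalar
  have hnonscalar : ¬((m : Matrix (Fin 2) (Fin 2) ℝ) 0 1 = 0 ∧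
      (m : Matrix (Fin 2) (Fin 2) ℝ) 1 0 = 0 ∧
      (m : Matrix (Fin 2) (Fin 2) ℝ) 0 0 = (m : Matrix (Fin 2) (Fin 2) ℝ) 1 1) := by
    rintro ⟨e1, e2, e3⟩
    have hd : Matrix.det (m : Matrix (Fin 2) (Fin 2) ℝ) = 1 := m.2
    rw [Matrix.det_fin_two, e1, e2, ← e3] at hd
    have h00 : (m : Matrix (Fin 2) (Fin 2) ℝ) 0 0 = 1 ∨
        (m : Matrix (Fin 2) (Fin 2) ℝ) 0 0 = -1 := by
      rcases mul_eq_zero.mp (show ((m : Matrix (Fin 2) (Fin 2) ℝ) 0 0 - 1) *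
          ((m : Matrix (Fin 2) (Fin 2) ℝ) 0 0 + 1) = 0 by nlinarith [hd]) with h | h
      · left; linarith
      · right; linarith
    have : trSL m = (m : Matrix (Fin 2) (Fin 2) ℝ) 0 0 + (m : Matrix (Fin 2) (Fin 2) ℝ) 1 1 := by
      simp [trSL, Matrix.trace_fin_two]
    rcases h00 with h | h <;>
      · rw [this, ← e3, h] at htm; norm_num at htm; rw [← htm] at hx; norm_num at hx
  -- conjugation facts
  have conj_h : h' * m * h'⁻¹ = m⁻¹ := by
    rw [hmi, hhi, hm]
    calc h' * (h' * k) * -h' = -((h' * h') * (k * h')) := by noncomm_ring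
    _ = k * h' := by rw [hh2]; simp
  have conj_k : k * m * k⁻¹ = m⁻¹ := by
    rw [hmi, hki, hm]
    calc k * (h' * k) * -k = -(k * h' * (k * k)) := by noncomm_ring
    _ = k * h' := by rw [hk2]; simp
  have conj_g : g' * m * g'⁻¹ = m := by
    have hg' : g' = k * h'⁻¹ := by rw [hk]; group
    have conj_hinv : h'⁻¹ * m * h' = m⁻¹ := by
      rw [hhi]
      calc (-h') * m * h' = h' * m * (-h') := by noncomm_ring
      _ = h' * m * h'⁻¹ := by rw [hhi]
      _ = m⁻¹ := conj_h
    calc g' * m * g'⁻¹ = k * (h'⁻¹ * m * h') * k⁻¹ := by rw [hg']; group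
    _ = k * m⁻¹ * k⁻¹ := by rw [conj_hinv]
    _ = (k * m * k⁻¹)⁻¹ := by group
    _ = (m⁻¹)⁻¹ := by rw [conj_k]
    _ = m := inv_inv m
  -- every element of the closure conjugates m to m or m⁻¹
  have main : ∀ w ∈ Subgroup.closure ({g',h'} : Set SL2),
      w * m * w⁻¹ = m ∨ w * m * w⁻¹ = m⁻¹ := by
    intro w hw
    induction hw using Subgroup.closure_induction with
    | mem x hx =>
      rcases hx with h | h
      · subst h; exact Or.inl conj_g
      · subst h; exact Or.inr conj_h
    | one => simp
    | mul x y hx hy px py =>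
      have e : (x*y) * m * (x*y)⁻¹ = x * (y * m * y⁻¹) * x⁻¹ := by group
      rcases py with p | p <;> rw [e, p]
      · exact px
      · rcases px with q | q
        · right
          calc x * m⁻¹ * x⁻¹ = (x * m * x⁻¹)⁻¹ := by group
          _ = m⁻¹ := by rw [q]
        · left
          calc x * m⁻¹ * x⁻¹ = (x * m * x⁻¹)⁻¹ := by group
          _ = (m⁻¹)⁻¹ := by rw [q]
          _ = m := inv_inv m
    | inv x hx px =>
      have e1 : x⁻¹ * (x * m * x⁻¹) * x = m := by group
      rcases px with p | p
      · rw [p] at e1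
        left; rw [inv_inv]; exact e1
      · rw [p] at e1
        right; rw [inv_inv]
        calc x⁻¹ * m * x = (x⁻¹ * m⁻¹ * x)⁻¹ := by group
        _ = m⁻¹ := by rw [e1]
  set G := Subgroup.closure ({g',h'} : Set SL2) with hG
  set H : Subgroup ↥G := (Subgroup.centralizer {m}).comap G.subtype with hH
  have memH : ∀ w : ↥G, (w : SL2) * m = m * (w : SL2) → w ∈ H := by
    intro w hw
    rw [hH, Subgroup.mem_comap, Subgroup.mem_centralizer_iff]
    rintro y ⟨rfl⟩
    exact hw.symm
  have memH' : ∀ w : ↥G, w ∈ H → (w : SL2) * m = m * (w : SL2) := by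
    intro w hw
    rw [hH, Subgroup.mem_comap, Subgroup.mem_centralizer_iff] at hw
    exact (hw m rfl).symm
  have hηmem : h' ∈ G := Subgroup.subset_closure (by simp)
  refine ⟨H, ?_, ?_⟩
  · -- finite index
    have cover : ∀ w : ↥G, w ∈ H ∨ (⟨h', hηmem⟩ : ↥G) * w ∈ H := by
      rintro ⟨wv, hwv⟩
      rcases main wv hwv with p | p
      · left
        apply memH
        show wv * m = m * wv
        calc wv * m = (wv * m * wv⁻¹) * wv := by group
        _ = m * wv := by rw [p]
      · right
        apply memH
        show (h' * wv) * m = m * (h' * wv)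
        have e2 : (h' * wv) * m * (h' * wv)⁻¹ = m := by
          calc (h' * wv) * m * (h' * wv)⁻¹
              = h' * (wv * m * wv⁻¹) * h'⁻¹ := by group
          _ = h' * m⁻¹ * h'⁻¹ := by rw [p]
          _ = (h' * m * h'⁻¹)⁻¹ := by group
          _ = (m⁻¹)⁻¹ := by rw [conj_h]
          _ = m := inv_inv m
        calc (h' * wv) * m = ((h' * wv) * m * (h' * wv)⁻¹) * (h' * wv) := by group
        _ = m * (h' * wv) := by rw [e2]
    haveI : Finite (↥G ⧸ H) := by
      apply Finite.of_surjective (fun b : Bool =>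
        if b then ((1 : ↥G) : ↥G ⧸ H) else (((⟨h', hηmem⟩ : ↥G)⁻¹ : ↥G) : ↥G ⧸ H))
      intro q
      obtain ⟨w, rfl⟩ := QuotientGroup.mk_surjective q
      rcases cover w with p | p
      · refine ⟨true, ?_⟩
        simp only [if_true]
        rw [QuotientGroup.eq]
        simpa using p
      · refine ⟨false, ?_⟩
        simp only [Bool.false_eq_true, if_false]
        rw [QuotientGroup.eq]
        simpa using p
    exact @Subgroup.finiteIndex_of_finite_quotient _ _ H this
  · -- abelian
    intro a b
    have hA := memH' a.1 a.2
    have hB := memH' b.1 b.2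
    have hAm : ((a.1 : SL2) : Matrix (Fin 2) (Fin 2) ℝ) * (m : Matrix (Fin 2) (Fin 2) ℝ) =
        (m : Matrix (Fin 2) (Fin 2) ℝ) * ((a.1 : SL2) : Matrix (Fin 2) (Fin 2) ℝ) := by
      rw [← Matrix.SpecialLinearGroup.coe_mul, ← Matrix.SpecialLinearGroup.coe_mul, hA]
    have hBm : ((b.1 : SL2) : Matrix (Fin 2) (Fin 2) ℝ) * (m : Matrix (Fin 2) (Fin 2) ℝ) =
        (m : Matrix (Fin 2) (Fin 2) ℝ) * ((b.1 : SL2) : Matrix (Fin 2) (Fin 2) ℝ) := by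
      rw [← Matrix.SpecialLinearGroup.coe_mul, ← Matrix.SpecialLinearGroup.coe_mul, hB]
    have hcomm := commute_of_commute_nonscalar (m : Matrix (Fin 2) (Fin 2) ℝ) _ _
      hnonscalar hAm hBm
    have e1 : (a.1 : SL2) * (b.1 : SL2) = (b.1 : SL2) * (a.1 : SL2) := by
      apply Subtype.ext
      rw [Matrix.SpecialLinearGroup.coe_mul, Matrix.SpecialLinearGroup.coe_mul]
      exact hcomm
    apply Subtype.ext
    rw [Subgroup.coe_mul, Subgroup.coe_mul]
    apply Subtype.ext
    rw [Subgroup.coe_mul, Subgroup.coe_mul]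
    exact e1

namespace Aut2

open FreeGroup

def e1 : F2 →* F2 := FreeGroup.lift ![.of 0, (.of 1)⁻¹]
def e2 : F2 →* F2 := FreeGroup.lift ![.of 1, .of 0]
def e3 : F2 →* F2 := FreeGroup.lift ![.of 0, .of 0 * .of 1]
def e3' : F2 →* F2 := FreeGroup.lift ![.of 0, (.of 0)⁻¹ * .of 1]
def e4 : F2 →* F2 := FreeGroup.lift ![.of 1, (.of 0 * .of 1)⁻¹]
def e4' : F2 →* F2 := FreeGroup.lift ![(.of 1)⁻¹ * (.of 0)⁻¹, .of 0]

def φ1 : MulAut F2 := MonoidHom.toMulEquiv e1 e1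
  (by apply FreeGroup.ext_hom; intro i; fin_cases i <;> simp [e1])
  (by apply FreeGroup.ext_hom; intro i; fin_cases i <;> simp [e1])

def φ2 : MulAut F2 := MonoidHom.toMulEquiv e2 e2
  (by apply FreeGroup.ext_hom; intro i; fin_cases i <;> simp [e2])
  (by apply FreeGroup.ext_hom; intro i; fin_cases i <;> simp [e2])

def φ3 : MulAut F2 := MonoidHom.toMulEquiv e3 e3'
  (by apply FreeGroup.ext_hom; intro i; fin_cases i <;> simp [e3, e3'])
  (by apply FreeGroup.ext_hom; intro i; fin_cases i <;> simp [e3, e3'])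

def φ4 : MulAut F2 := MonoidHom.toMulEquiv e4 e4'
  (by apply FreeGroup.ext_hom; intro i; fin_cases i <;> simp [e4, e4'])
  (by apply FreeGroup.ext_hom; intro i; fin_cases i <;> simp [e4, e4'])

lemma φ1_a : φ1 (.of 0) = .of 0 := by simp [φ1, MonoidHom.toMulEquiv, e1]
lemma φ1_b : φ1 (.of 1) = (.of 1)⁻¹ := by simp [φ1, MonoidHom.toMulEquiv, e1]
lemma φ2_a : φ2 (.of 0) = .of 1 := by simp [φ2, MonoidHom.toMulEquiv, e2]
lemma φ2_b : φ2 (.of 1) = .of 0 := by simp [φ2, MonoidHom.toMulEquiv, e2]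
lemma φ3_a : φ3 (.of 0) = .of 0 := by simp [φ3, MonoidHom.toMulEquiv, e3]
lemma φ3_b : φ3 (.of 1) = .of 0 * .of 1 := by simp [φ3, MonoidHom.toMulEquiv, e3]
lemma φ4_a : φ4 (.of 0) = .of 1 := by simp [φ4, MonoidHom.toMulEquiv, e4]
lemma φ4_b : φ4 (.of 1) = (.of 0 * .of 1)⁻¹ := by simp [φ4, MonoidHom.toMulEquiv, e4]

end Aut2

inductive Step : (SL2 × SL2) → (SL2 × SL2) → Prop
  | t1 (g h : SL2) : Step (g, h) (g, h⁻¹)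
  | t2 (g h : SL2) : Step (g, h) (h, g)
  | t3 (g h : SL2) : Step (g, h) (g, g*h)
  | t4 (g h : SL2) : Step (g, h) (h, (g*h)⁻¹)

def Reach : (SL2 × SL2) → (SL2 × SL2) → Prop := Relation.ReflTransGen Step

def pr (ρ : F2 →* SL2) (φ : MulAut F2) : SL2 × SL2 :=
  (ρ (φ (.of 0)), ρ (φ (.of 1)))

lemma step_aut (ρ : F2 →* SL2) (φ : MulAut F2) (q : SL2 × SL2)
    (hs : Step (pr ρ φ) q) : ∃ ψ : MulAut F2, pr ρ ψ = q := by
  cases hs with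
  | t1 g h => exact ⟨(Aut2.φ1 : MulAut F2).trans φ,
      by simp [pr, MulEquiv.trans_apply, Aut2.φ1_a, Aut2.φ1_b, map_inv]⟩
  | t2 g h => exact ⟨(Aut2.φ2 : MulAut F2).trans φ,
      by simp [pr, MulEquiv.trans_apply, Aut2.φ2_a, Aut2.φ2_b]⟩
  | t3 g h => exact ⟨(Aut2.φ3 : MulAut F2).trans φ,
      by simp [pr, MulEquiv.trans_apply, Aut2.φ3_a, Aut2.φ3_b, map_mul]⟩
  | t4 g h => exact ⟨(Aut2.φ4 : MulAut F2).trans φ,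
      by simp [pr, MulEquiv.trans_apply, Aut2.φ4_a, Aut2.φ4_b, map_mul, map_inv]⟩

lemma reach_aut (ρ : F2 →* SL2) (q : SL2 × SL2)
    (hr : Reach (pr ρ (MulEquiv.refl F2)) q) : ∃ ψ : MulAut F2, pr ρ ψ = q := by
  induction hr with
  | refl => exact ⟨MulEquiv.refl F2, rfl⟩
  | tail h step ih =>
    obtain ⟨ψ, rfl⟩ := ih
    exact step_aut ρ ψ _ step

-- move trace computations
lemma tr_t3 (g h : SL2) : trSL (g*(g*h)) = trSL g * trSL (g*h) - trSL h := by
  have h1 := trSL_fricke g (g*h)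
  have h2 : g * (g*h)⁻¹ = g * h⁻¹ * g⁻¹ := by group
  rw [h2] at h1
  have h3 : trSL (g * h⁻¹ * g⁻¹) = trSL h := by rw [trSL_conj, trSL_inv]
  rw [h3] at h1
  linarith

lemma tr_t4 (g h : SL2) : trSL (h*(g*h)⁻¹) = trSL g := by
  have : h * (g*h)⁻¹ = g⁻¹ := by group
  rw [this, trSL_inv]

def χ (p : SL2 × SL2) : ℝ :=
  trSL p.1 ^2 + trSL p.2 ^2 + trSL (p.1 * p.2) ^2 - trSL p.1 * trSL p.2 * trSL (p.1 * p.2)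

lemma step_χ {p q : SL2 × SL2} (hs : Step p q) : χ q = χ p := by
  cases hs with
  | t1 g h =>
    simp only [χ, trSL_inv, trSL_fricke]
    ring
  | t2 g h =>
    simp only [χ]
    rw [trSL_mul_comm h g]
    ring
  | t3 g h =>
    simp only [χ, tr_t3]
    ring
  | t4 g h =>
    simp only [χ, tr_t4, trSL_inv]
    ring

lemma reach_χ {p q : SL2 × SL2} (hr : Reach p q) : χ q = χ p := by
  induction hr with
  | refl => rfl
  | tail _ hstep ih => rw [step_χ hstep, ih]

lemma step_closure {p q : SL2 × SL2} (hs : Step p q) :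
    Subgroup.closure {q.1, q.2} = Subgroup.closure {p.1, p.2} := by
  have sc : ∀ (A B x : SL2), x ∈ ({A, B} : Set SL2) → x ∈ Subgroup.closure ({A, B} : Set SL2) :=
    fun A B x hx => Subgroup.subset_closure hx
  cases hs with
  | t1 g h =>
    simp only
    apply le_antisymm <;>
      rw [Subgroup.closure_le, Set.insert_subset_iff, Set.singleton_subset_iff]
    · exact ⟨sc _ _ _ (by simp), inv_mem (sc g h h (by simp))⟩
    · exact ⟨sc _ _ _ (by simp), inv_mem_iff.1 (sc g h⁻¹ h⁻¹ (by simp))⟩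
  | t2 g h =>
    simp only
    apply le_antisymm <;>
        rw [Subgroup.closure_le, Set.insert_subset_iff, Set.singleton_subset_iff] <;>
      exact ⟨sc _ _ _ (by simp), sc _ _ _ (by simp)⟩
  | t3 g h =>
    simp only
    apply le_antisymm <;>
      rw [Subgroup.closure_le, Set.insert_subset_iff, Set.singleton_subset_iff]
    · exact ⟨sc _ _ _ (by simp), mul_mem (sc g h g (by simp)) (sc g h h (by simp))⟩
    · refine ⟨sc _ _ _ (by simp), ?_⟩
      have e : g⁻¹ * (g*h) = h := by group
      have mm : g⁻¹ * (g*h) ∈ Subgroup.closure ({g, g*h} : Set SL2) :=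
        mul_mem (inv_mem (sc g (g*h) g (by simp))) (sc g (g*h) (g*h) (by simp))
      rwa [e] at mm
  | t4 g h =>
    simp only
    apply le_antisymm <;>
      rw [Subgroup.closure_le, Set.insert_subset_iff, Set.singleton_subset_iff]
    · exact ⟨sc _ _ _ (by simp),
        inv_mem (mul_mem (sc g h g (by simp)) (sc g h h (by simp)))⟩
    · constructor
      · have e : (g*h)⁻¹⁻¹ * h⁻¹ = g := by group
        have mm : (g*h)⁻¹⁻¹ * h⁻¹ ∈ Subgroup.closure ({h, (g*h)⁻¹} : Set SL2) :=
          mul_mem (inv_mem (sc h ((g*h)⁻¹) ((g*h)⁻¹) (by simp)))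
            (inv_mem (sc h ((g*h)⁻¹) h (by simp)))
        rwa [e] at mm
      · exact sc _ _ _ (by simp)

lemma reach_closure {p q : SL2 × SL2} (hr : Reach p q) :
    Subgroup.closure {q.1, q.2} = Subgroup.closure {p.1, p.2} := by
  induction hr with
  | refl => rfl
  | tail _ hstep ih => rw [step_closure hstep, ih]

noncomputable section

def X (p : SL2 × SL2) : ℝ := trSL p.1
def Y (p : SL2 × SL2) : ℝ := trSL p.2
def Z (p : SL2 × SL2) : ℝ := trSL (p.1 * p.2)

def m1 (p : SL2 × SL2) : SL2 × SL2 := (p.1, p.2⁻¹)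
def m2 (p : SL2 × SL2) : SL2 × SL2 := (p.2, p.1)
def m3 (p : SL2 × SL2) : SL2 × SL2 := (p.1, p.1 * p.2)
def m4 (p : SL2 × SL2) : SL2 × SL2 := (p.2, (p.1 * p.2)⁻¹)

lemma step_m1 (p : SL2 × SL2) : Step p (m1 p) := by cases p; exact Step.t1 _ _
lemma step_m2 (p : SL2 × SL2) : Step p (m2 p) := by cases p; exact Step.t2 _ _
lemma step_m3 (p : SL2 × SL2) : Step p (m3 p) := by cases p; exact Step.t3 _ _
lemma step_m4 (p : SL2 × SL2) : Step p (m4 p) := by cases p; exact Step.t4 _ _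

lemma reach_m1 (p : SL2 × SL2) : Reach p (m1 p) := Relation.ReflTransGen.single (step_m1 p)
lemma reach_m2 (p : SL2 × SL2) : Reach p (m2 p) := Relation.ReflTransGen.single (step_m2 p)
lemma reach_m3 (p : SL2 × SL2) : Reach p (m3 p) := Relation.ReflTransGen.single (step_m3 p)
lemma reach_m4 (p : SL2 × SL2) : Reach p (m4 p) := Relation.ReflTransGen.single (step_m4 p)

@[simp] lemma X_m1 (p) : X (m1 p) = X p := rfl
@[simp] lemma Y_m1 (p) : Y (m1 p) = Y p := trSL_inv _
@[simp] lemma Z_m1 (p) : Z (m1 p) = X p * Y p - Z p := trSL_fricke _ _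
@[simp] lemma X_m2 (p) : X (m2 p) = Y p := rfl
@[simp] lemma Y_m2 (p) : Y (m2 p) = X p := rfl
@[simp] lemma Z_m2 (p) : Z (m2 p) = Z p := trSL_mul_comm _ _
@[simp] lemma X_m3 (p) : X (m3 p) = X p := rfl
@[simp] lemma Y_m3 (p) : Y (m3 p) = Z p := rfl
@[simp] lemma Z_m3 (p) : Z (m3 p) = X p * Z p - Y p := tr_t3 _ _
@[simp] lemma X_m4 (p) : X (m4 p) = Y p := rfl
@[simp] lemma Y_m4 (p) : Y (m4 p) = Z p := trSL_inv _
@[simp] lemma Z_m4 (p) : Z (m4 p) = X p := tr_t4 _ _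

/-- y-Vieta composite -/
def yv (p : SL2 × SL2) : SL2 × SL2 := m1 (m3 (m3 p))
/-- x-Vieta composite -/
def xv (p : SL2 × SL2) : SL2 × SL2 := m4 (m4 (m1 (m4 p)))

lemma reach_yv (p) : Reach p (yv p) :=
  ((reach_m3 p).tail (step_m3 _)).tail (step_m1 _)

lemma reach_xv (p) : Reach p (xv p) :=
  (((reach_m4 p).tail (step_m1 _)).tail (step_m4 _)).tail (step_m4 _)

@[simp] lemma X_yv (p) : X (yv p) = X p := by simp [yv]
@[simp] lemma Y_yv (p) : Y (yv p) = X p * Z p - Y p := by simp [yv]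
@[simp] lemma Z_yv (p) : Z (yv p) = Z p := by simp [yv]
@[simp] lemma X_xv (p) : X (xv p) = Y p * Z p - X p := by simp [xv]
@[simp] lemma Y_xv (p) : Y (xv p) = Y p := by simp [xv]
@[simp] lemma Z_xv (p) : Z (xv p) = Z p := by simp [xv]

def GoodAbs (p : SL2 × SL2) : Prop := 2 < |X p| ∧ 2 < |Y p| ∧ 2 < |Z p|

def InCube (p : SL2 × SL2) : Prop := |X p| ≤ 2 ∧ |Y p| ≤ 2 ∧ |Z p| ≤ 2

def σ2 (p : SL2 × SL2) : ℝ := X p ^2 + Y p ^2 + Z p ^2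


lemma χ_eq (p) : χ p = X p^2 + Y p^2 + Z p^2 - X p * Y p * Z p := rfl

-- growth of sum of squares under the three Vieta moves
lemma σ2_m1 (p) : σ2 (m1 p) = σ2 p + ((X p * Y p)^2 - 2*(X p * Y p * Z p)) := by
  simp [σ2]; ring
lemma σ2_yv (p) : σ2 (yv p) = σ2 p + ((X p * Z p)^2 - 2*(X p * Y p * Z p)) := by
  simp [σ2]; ring
lemma σ2_xv (p) : σ2 (xv p) = σ2 p + ((Y p * Z p)^2 - 2*(X p * Y p * Z p)) := by
  simp [σ2]; ring

-- the (0,2] cube inequality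
lemma uvw_ineq (u v w : ℝ) (hu : 0 < u) (hu2 : u ≤ 2) (hv : 0 < v) (hv2 : v ≤ 2)
    (hw : 0 < w) (hw2 : w ≤ 2) : u*v + v*w + w*u ≤ 4 + u*v*w := by
  rcases le_or_gt (v + w - v*w) 0 with hs | hs
  · nlinarith [mul_nonneg hu.le (neg_nonneg.2 hs), mul_le_mul hv2 hw2 hw.le (by norm_num : (0:ℝ) ≤ 2),
      mul_pos (mul_pos hu hv) hw]
  · nlinarith [mul_nonneg (by linarith : (0:ℝ) ≤ 2 - u) hs.le,
      mul_nonneg (by linarith : (0:ℝ) ≤ 2 - v) (by linarith : (0:ℝ) ≤ 2 - w),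
      mul_pos (mul_pos hu hv) hw]

lemma uvw_scaled (P a b c : ℝ) (hP : 0 < P) (ha : 0 < a) (ha2 : a ≤ 2*P)
    (hb : 0 < b) (hb2 : b ≤ 2*P) (hc : 0 < c) (hc2 : c ≤ 2*P) :
    (a*b + b*c + c*a)*P ≤ 4*P^3 + a*b*c := by
  rcases le_or_gt ((b+c)*P - b*c) 0 with hs | hs
  · nlinarith [mul_nonneg ha.le (neg_nonneg.2 hs),
      mul_nonneg (sub_nonneg.2 (by nlinarith [mul_le_mul hb2 hc2 hc.le (by linarith : (0:ℝ) ≤ 2*P)] : b*c ≤ 4*P^2)) hP.le]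
  · nlinarith [mul_nonneg (by linarith : (0:ℝ) ≤ 2*P - a) hs.le,
      mul_nonneg (mul_nonneg (by linarith : (0:ℝ) ≤ 2*P - b) (by linarith : (0:ℝ) ≤ 2*P - c)) hP.le]

/-- the key algebraic fact: inside the cube, at level > 4, some Vieta move
strictly increases the sum of squares -/
lemma alg_key (x y z : ℝ) (hc : 4 < x^2+y^2+z^2 - x*y*z)
    (hx : |x| ≤ 2) (hy : |y| ≤ 2) (hz : |z| ≤ 2) :
    0 < max (max ((x*y)^2) ((y*z)^2)) ((z*x)^2) - 2*(x*y*z) := by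
  by_contra hcon
  push_neg at hcon
  have h1 : (x*y)^2 ≤ 2*(x*y*z) := by
    have := le_max_left (max ((x*y)^2) ((y*z)^2)) ((z*x)^2)
    have := le_max_left ((x*y)^2) ((y*z)^2)
    nlinarith
  have h2 : (y*z)^2 ≤ 2*(x*y*z) := by
    have := le_max_left (max ((x*y)^2) ((y*z)^2)) ((z*x)^2)
    have := le_max_right ((x*y)^2) ((y*z)^2)
    nlinarith
  have h3 : (z*x)^2 ≤ 2*(x*y*z) := by
    have := le_max_right (max ((x*y)^2) ((y*z)^2)) ((z*x)^2)
    nlinarith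
  have hx2 : x^2 ≤ 4 := by nlinarith [abs_nonneg x, sq_abs x]
  have hy2 : y^2 ≤ 4 := by nlinarith [abs_nonneg y, sq_abs y]
  have hz2 : z^2 ≤ 4 := by nlinarith [abs_nonneg z, sq_abs z]
  set P := x*y*z with hP
  have hPnn : 0 ≤ P := by nlinarith [sq_nonneg (x*y)]
  rcases eq_or_lt_of_le hPnn with hP0 | hPpos
  · -- P = 0 : all pairwise products vanish
    rw [← hP0] at h1 h2 h3 hc
    have e1 : x*y = 0 := pow_eq_zero_iff two_ne_zero |>.mp
      (le_antisymm (by linarith) (sq_nonneg _))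
    have e2 : y*z = 0 := pow_eq_zero_iff two_ne_zero |>.mp
      (le_antisymm (by linarith) (sq_nonneg _))
    have e3 : z*x = 0 := pow_eq_zero_iff two_ne_zero |>.mp
      (le_antisymm (by linarith) (sq_nonneg _))
    rcases mul_eq_zero.mp e1 with h | h
    · rcases mul_eq_zero.mp e2 with h' | h'
      · rw [h, h'] at hc; nlinarith [hz2]
      · rw [h, h'] at hc; nlinarith [hy2]
    · rcases mul_eq_zero.mp e3 with h' | h'
      · rw [h', h] at hc; nlinarith [hz2]
      · rw [h, h'] at hc; nlinarith [hx2]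
  · -- P > 0
    have hPpos' : 0 < x*y*z := hPpos
    have hyz0 : y*z ≠ 0 := by
      intro h0; rw [mul_assoc, h0, mul_zero] at hPpos'; exact lt_irrefl 0 hPpos'
    have hxy0 : x*y ≠ 0 := by
      intro h0; rw [show x*y*z = (x*y)*z from by ring, h0, zero_mul] at hPpos'
      exact lt_irrefl 0 hPpos'
    have hzx0 : z*x ≠ 0 := by
      intro h0; rw [show x*y*z = (z*x)*y from by ring, h0, zero_mul] at hPpos'
      exact lt_irrefl 0 hPpos'
    have ha : (0:ℝ) < (y*z)^2 := (sq_nonneg _).lt_of_ne (Ne.symm (pow_ne_zero 2 hyz0))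
    have hb : (0:ℝ) < (z*x)^2 := (sq_nonneg _).lt_of_ne (Ne.symm (pow_ne_zero 2 hzx0))
    have hcc : (0:ℝ) < (x*y)^2 := (sq_nonneg _).lt_of_ne (Ne.symm (pow_ne_zero 2 hxy0))
    have key := uvw_scaled P ((y*z)^2) ((z*x)^2) ((x*y)^2) hPpos ha (by linarith)
      hb (by linarith) hcc (by linarith)
    have key2 : P^3*(x^2+y^2+z^2) ≤ P^3*(4 + P) := by
      rw [hP]; linear_combination key
    have key3 : x^2+y^2+z^2 ≤ 4 + P :=
      le_of_mul_le_mul_left (by linarith [key2]) (pow_pos hPpos 3)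
    linarith

-- positivity of all three positivity... (hxyz unused is fine)

lemma σ2_le_12_of_cube {p : SL2 × SL2} (h : InCube p) : σ2 p ≤ 12 := by
  obtain ⟨h1, h2, h3⟩ := h
  have e1 : X p^2 ≤ 4 := by nlinarith [abs_nonneg (X p), sq_abs (X p)]
  have e2 : Y p^2 ≤ 4 := by nlinarith [abs_nonneg (Y p), sq_abs (Y p)]
  have e3 : Z p^2 ≤ 4 := by nlinarith [abs_nonneg (Z p), sq_abs (Z p)]
  simp only [σ2]; linarith

/-- greedy step: from a cube point at level `> 4`, some move increases σ2 by the
max-gap quantity. -/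
lemma greedy {q : SL2 × SL2} :
    ∃ q', Reach q q' ∧ χ q' = χ q ∧
      σ2 q' = σ2 q + (max (max ((X q*Y q)^2) ((Y q*Z q)^2)) ((Z q*X q)^2)
        - 2*(X q*Y q*Z q)) := by
  rcases max_choice (max ((X q*Y q)^2) ((Y q*Z q)^2)) ((Z q*X q)^2) with h | h
  · rcases max_choice ((X q*Y q)^2) ((Y q*Z q)^2) with h' | h'
    · refine ⟨m1 q, reach_m1 q, reach_χ (reach_m1 q), ?_⟩
      rw [h, h', σ2_m1]
    · refine ⟨xv q, reach_xv q, reach_χ (reach_xv q), ?_⟩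
      rw [h, h', σ2_xv]
  · refine ⟨yv q, reach_yv q, reach_χ (reach_yv q), ?_⟩
    rw [h, σ2_yv]
    ring

lemma cube_escape (p : SL2 × SL2) (hc : 4 < χ p) (hcube : InCube p) :
    ∃ q, Reach p q ∧ ¬ InCube q := by
  classical
  set c₀ := χ p with hc₀
  set S : Set (ℝ × ℝ × ℝ) := {v | v.1^2 + v.2.1^2 + v.2.2^2 - v.1*v.2.1*v.2.2 = c₀ ∧
    |v.1| ≤ 2 ∧ |v.2.1| ≤ 2 ∧ |v.2.2| ≤ 2} with hS
  set G : ℝ × ℝ × ℝ → ℝ := fun v =>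
    max (max ((v.1*v.2.1)^2) ((v.2.1*v.2.2)^2)) ((v.2.2*v.1)^2) - 2*(v.1*v.2.1*v.2.2) with hG
  have hGcont : Continuous G := by
    apply Continuous.sub
    · apply Continuous.max
      apply Continuous.max
      · fun_prop
      · fun_prop
      · fun_prop
    · fun_prop
  have hSclosed : IsClosed S := by
    apply IsClosed.inter
    · exact isClosed_eq (by fun_prop) continuous_const
    apply IsClosed.inter
    · exact isClosed_le continuous_fst.abs continuous_const
    apply IsClosed.inter
    · exact isClosed_le (continuous_fst.comp continuous_snd).abs continuous_const
    · exact isClosed_le (continuous_snd.comp continuous_snd).abs continuous_const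
  have hSsub : S ⊆ Set.Icc ((-2:ℝ),(-2:ℝ),(-2:ℝ)) ((2:ℝ),(2:ℝ),(2:ℝ)) := by
    rintro ⟨a, b, c⟩ ⟨_, h1, h2, h3⟩
    rw [abs_le] at h1 h2 h3
    exact ⟨⟨h1.1, h2.1, h3.1⟩, ⟨h1.2, h2.2, h3.2⟩⟩
  have hScompact : IsCompact S := IsCompact.of_isClosed_subset isCompact_Icc hSclosed hSsub
  have hmemS : ∀ q : SL2 × SL2, InCube q → χ q = c₀ → ((X q, Y q, Z q) : ℝ×ℝ×ℝ) ∈ S := by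
    rintro q ⟨h1, h2, h3⟩ hq
    refine ⟨?_, h1, h2, h3⟩
    rw [← hq, χ_eq]
  have hSne : S.Nonempty := ⟨(X p, Y p, Z p), hmemS p hcube rfl⟩
  obtain ⟨vm, hvmS, hmin⟩ := hScompact.exists_isMinOn hSne hGcont.continuousOn
  have hδpos : 0 < G vm := by
    obtain ⟨hv0, hv1, hv2, hv3⟩ := hvmS
    have := alg_key vm.1 vm.2.1 vm.2.2 (by rw [hv0]; exact hc) hv1 hv2 hv3
    exact this
  set δ := G vm with hδ
  have iter : ∀ n : ℕ, ∃ q, Reach p q ∧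
      (¬ InCube q ∨ (InCube q ∧ χ q = c₀ ∧ σ2 p + n * δ ≤ σ2 q)) := by
    intro n
    induction n with
    | zero => exact ⟨p, Relation.ReflTransGen.refl, Or.inr ⟨hcube, rfl, by simp⟩⟩
    | succ n ih =>
      obtain ⟨q, hreach, hq⟩ := ih
      rcases hq with hq | ⟨hqcube, hqχ, hqσ⟩
      · exact ⟨q, hreach, Or.inl hq⟩
      · obtain ⟨q', hreach', hχ', hσ'⟩ := greedy (q := q)
        have hvq : ((X q, Y q, Z q) : ℝ×ℝ×ℝ) ∈ S := hmemS q hqcube hqχ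
        have hGq : δ ≤ G (X q, Y q, Z q) := isMinOn_iff.mp hmin _ hvq
        have hGeq : G (X q, Y q, Z q) =
            max (max ((X q*Y q)^2) ((Y q*Z q)^2)) ((Z q*X q)^2) - 2*(X q*Y q*Z q) := rfl
        by_cases hq'cube : InCube q'
        · refine ⟨q', hreach.trans hreach', Or.inr ⟨hq'cube, by rw [hχ', hqχ], ?_⟩⟩
          rw [hσ']
          push_cast
          rw [hGeq] at hGq
          nlinarith [hGq, hqσ]
        · exact ⟨q', hreach.trans hreach', Or.inl hq'cube⟩
  obtain ⟨n, hn⟩ := exists_nat_gt ((12 - σ2 p) / δ)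
  obtain ⟨q, hreach, hq⟩ := iter n
  rcases hq with hq | ⟨hqcube, _, hqσ⟩
  · exact ⟨q, hreach, hq⟩
  · exfalso
    have h12 := σ2_le_12_of_cube hqcube
    rw [div_lt_iff₀ hδpos] at hn
    linarith

lemma onestep (p : SL2 × SL2) (hx : 2 < |X p|) :
    ∃ q, Reach p q ∧ X q = X p ∧
      (|X p| - 1) * max (|Y p|) (|Z p|) ≤ max (|Y q|) (|Z q|) := by
  rcases le_total (|Z p|) (|Y p|) with hca | hca
  · refine ⟨m1 p, reach_m1 p, rfl, ?_⟩
    rw [max_eq_left hca]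
    have t1 : |X p * Y p| - |Z p| ≤ |X p * Y p - Z p| := abs_sub_abs_le_abs_sub _ _
    rw [abs_mul] at t1
    have t2 : (|X p| - 1) * |Y p| ≤ |X p * Y p - Z p| := by nlinarith [abs_nonneg (Y p)]
    calc (|X p| - 1) * |Y p| ≤ |X p * Y p - Z p| := t2
    _ = |Z (m1 p)| := by rw [Z_m1]
    _ ≤ max (|Y (m1 p)|) (|Z (m1 p)|) := le_max_right _ _
  · refine ⟨yv p, reach_yv p, by rw [X_yv], ?_⟩
    rw [max_eq_right hca]
    have t1 : |X p * Z p| - |Y p| ≤ |X p * Z p - Y p| := abs_sub_abs_le_abs_sub _ _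
    rw [abs_mul] at t1
    have t2 : (|X p| - 1) * |Z p| ≤ |X p * Z p - Y p| := by nlinarith [abs_nonneg (Z p)]
    calc (|X p| - 1) * |Z p| ≤ |X p * Z p - Y p| := t2
    _ = |Y (yv p)| := by rw [Y_yv]
    _ ≤ max (|Y (yv p)|) (|Z (yv p)|) := le_max_left _ _

lemma grow (n : ℕ) : ∀ p : SL2 × SL2, 2 < |X p| → 0 < max (|Y p|) (|Z p|) →
    ∃ q, Reach p q ∧ X q = X p ∧
      (|X p| - 1)^n * max (|Y p|) (|Z p|) ≤ max (|Y q|) (|Z q|) := by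
  induction n with
  | zero => intro p hx hm; exact ⟨p, Relation.ReflTransGen.refl, rfl, by simp⟩
  | succ n ih =>
    intro p hx hm
    obtain ⟨q1, hr1, hX1, hb1⟩ := onestep p hx
    have hm1 : 0 < max (|Y q1|) (|Z q1|) := by nlinarith [hb1, hm]
    obtain ⟨q, hr, hX, hb⟩ := ih q1 (by rw [hX1]; exact hx) hm1
    refine ⟨q, hr1.trans hr, by rw [hX, hX1], ?_⟩
    rw [hX1] at hb
    calc (|X p| - 1)^(n+1) * max (|Y p|) (|Z p|)
        = (|X p| - 1)^n * ((|X p| - 1) * max (|Y p|) (|Z p|)) := by ring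
    _ ≤ (|X p| - 1)^n * max (|Y q1|) (|Z q1|) := by
        apply mul_le_mul_of_nonneg_left hb1 (pow_nonneg (by linarith) n)
    _ ≤ max (|Y q|) (|Z q|) := hb

lemma L1a (p : SL2 × SL2) (hx : 2 < |X p|) (hm : 0 < max (|Y p|) (|Z p|)) :
    ∃ q, Reach p q ∧ GoodAbs q := by
  obtain ⟨n, hn⟩ := pow_unbounded_of_one_lt (2 / max (|Y p|) (|Z p|))
    (show 1 < |X p| - 1 by linarith)
  obtain ⟨q1, hr1, hX1, hb1⟩ := grow n p hx hm
  rw [div_lt_iff₀ hm] at hn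
  have h2 : 2 < max (|Y q1|) (|Z q1|) := by nlinarith [hb1, hn]
  have hx1 : 2 < |X q1| := by rw [hX1]; exact hx
  rcases le_total (|Z q1|) (|Y q1|) with hca | hca
  · rw [max_eq_left hca] at h2
    refine ⟨m1 q1, hr1.tail (step_m1 _), ?_, ?_, ?_⟩
    · show 2 < |X (m1 q1)|; rw [X_m1]; exact hx1
    · show 2 < |Y (m1 q1)|; rw [Y_m1]; exact h2
    · show 2 < |Z (m1 q1)|
      rw [Z_m1]
      have t1 : |X q1 * Y q1| - |Z q1| ≤ |X q1 * Y q1 - Z q1| := abs_sub_abs_le_abs_sub _ _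
      rw [abs_mul] at t1
      nlinarith [abs_nonneg (Y q1)]
  · rw [max_eq_right hca] at h2
    refine ⟨yv q1, hr1.trans (reach_yv q1), ?_, ?_, ?_⟩
    · show 2 < |X (yv q1)|; rw [X_yv]; exact hx1
    · show 2 < |Y (yv q1)|
      rw [Y_yv]
      have t1 : |X q1 * Z q1| - |Y q1| ≤ |X q1 * Z q1 - Y q1| := abs_sub_abs_le_abs_sub _ _
      rw [abs_mul] at t1
      nlinarith [abs_nonneg (Z q1)]
    · show 2 < |Z (yv q1)|; rw [Z_yv]; exact h2

def GoodTriple (p : SL2 × SL2) : Prop :=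
  ∃ ε δ : ℝ, (ε = 1 ∨ ε = -1) ∧ (δ = 1 ∨ δ = -1) ∧
    2 < ε * X p ∧ 2 < δ * Y p ∧ 2 < ε * δ * Z p

lemma good_of_pos (p : SL2 × SL2) (h : GoodAbs p) (hpos : 0 < X p * Y p * Z p) :
    GoodTriple p := by
  obtain ⟨h1, h2, h3⟩ := h
  rcases lt_abs.mp h1 with hx | hx <;> rcases lt_abs.mp h2 with hy | hy <;>
    rcases lt_abs.mp h3 with hz | hz
  · exact ⟨1, 1, Or.inl rfl, Or.inl rfl, by linarith, by linarith, by nlinarith⟩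
  · exfalso
    nlinarith [mul_pos (mul_pos (show (0:ℝ) < X p by linarith) (show (0:ℝ) < Y p by linarith))
      (show (0:ℝ) < -Z p by linarith)]
  · exfalso
    nlinarith [mul_pos (mul_pos (show (0:ℝ) < X p by linarith) (show (0:ℝ) < -Y p by linarith))
      (show (0:ℝ) < Z p by linarith)]
  · exact ⟨1, -1, Or.inl rfl, Or.inr rfl, by linarith, by nlinarith, by nlinarith⟩
  · exfalso
    nlinarith [mul_pos (mul_pos (show (0:ℝ) < -X p by linarith) (show (0:ℝ) < Y p by linarith))
      (show (0:ℝ) < Z p by linarith)]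
  · exact ⟨-1, 1, Or.inr rfl, Or.inl rfl, by nlinarith, by linarith, by nlinarith⟩
  · exact ⟨-1, -1, Or.inr rfl, Or.inr rfl, by nlinarith, by nlinarith, by nlinarith⟩
  · exfalso
    nlinarith [mul_pos (mul_pos (show (0:ℝ) < -X p by linarith) (show (0:ℝ) < -Y p by linarith))
      (show (0:ℝ) < -Z p by linarith)]

lemma goodabs_good (p : SL2 × SL2) (h : GoodAbs p) :
    ∃ q, Reach p q ∧ GoodTriple q := by
  obtain ⟨h1, h2, h3⟩ := h
  have hx2 : 4 < X p^2 := by nlinarith [abs_nonneg (X p), sq_abs (X p)]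
  have hy2 : 4 < Y p^2 := by nlinarith [abs_nonneg (Y p), sq_abs (Y p)]
  have hz2 : 4 < Z p^2 := by nlinarith [abs_nonneg (Z p), sq_abs (Z p)]
  rcases lt_or_ge 0 (X p * Y p * Z p) with hpos | hneg
  · exact ⟨p, Relation.ReflTransGen.refl, good_of_pos p ⟨h1, h2, h3⟩ hpos⟩
  · refine ⟨m1 p, reach_m1 p, good_of_pos (m1 p) ⟨?_, ?_, ?_⟩ ?_⟩
    · rw [X_m1]; exact h1
    · rw [Y_m1]; exact h2
    · rw [Z_m1]
      have : 4 < (X p * Y p - Z p)^2 := by nlinarith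
      nlinarith [abs_nonneg (X p * Y p - Z p), sq_abs (X p * Y p - Z p)]
    · rw [X_m1, Y_m1, Z_m1]
      nlinarith

lemma to_big_x (q : SL2 × SL2) (h : ¬ InCube q) :
    ∃ q', Reach q q' ∧ 2 < |X q'| := by
  rw [InCube, not_and_or, not_and_or] at h
  push_neg at h
  rcases h with h | h | h
  · exact ⟨q, Relation.ReflTransGen.refl, h⟩
  · exact ⟨m2 q, reach_m2 q, by rw [X_m2]; exact h⟩
  · refine ⟨m4 (m4 q), (reach_m4 q).tail (step_m4 _), ?_⟩
    rw [X_m4, Y_m4]; exact h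

lemma master_s11 (p : SL2 × SL2) (hc : 4 < χ p)
    (hnd : ∀ q, Reach p q → 2 < |X q| → ¬(Y q = 0 ∧ Z q = 0)) :
    ∃ q, Reach p q ∧ GoodTriple q := by
  have escape : ∃ q, Reach p q ∧ ¬ InCube q := by
    by_cases hcube : InCube p
    · exact cube_escape p hc hcube
    · exact ⟨p, Relation.ReflTransGen.refl, hcube⟩
  obtain ⟨q0, hr0, hnc⟩ := escape
  obtain ⟨q1, hr1, hx1⟩ := to_big_x q0 hnc
  have hr01 : Reach p q1 := hr0.trans hr1
  have hm : 0 < max (|Y q1|) (|Z q1|) := by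
    rcases not_and_or.mp (hnd q1 hr01 hx1) with h | h
    · exact lt_of_lt_of_le (abs_pos.mpr h) (le_max_left _ _)
    · exact lt_of_lt_of_le (abs_pos.mpr h) (le_max_right _ _)
  obtain ⟨q2, hr2, hga⟩ := L1a q1 hx1 hm
  obtain ⟨q3, hr3, hgt⟩ := goodabs_good q2 hga
  exact ⟨q3, (hr01.trans hr2).trans hr3, hgt⟩

end

lemma χ_pair (g h : SL2) : χ (g, h) =
    trSL g ^2 + trSL h ^2 + trSL (g*h) ^2 - trSL g * trSL h * trSL (g*h) := rfl

/-- Let `ρ : F₂ → SL(2,ℝ)` with `g = ρ a`, `h = ρ b`, `Tr[g,h] > 2` and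
`⟨g,h⟩` not virtually abelian. Then there is an automorphism `φ` of `F₂` and
signs `ε, δ ∈ {±1}` such that `ε·Tr ρ(φ a) > 2`, `δ·Tr ρ(φ b) > 2` and
`ε·δ·Tr ρ(φ (a·b)) > 2`. -/
theorem stmt11 (ρ : FreeGroup (Fin 2) →* Matrix.SpecialLinearGroup (Fin 2) ℝ)
    (g h : Matrix.SpecialLinearGroup (Fin 2) ℝ)
    (hg : g = ρ (FreeGroup.of 0)) (hh : h = ρ (FreeGroup.of 1))
    (hcomm : 2 < trSL (g * h * g⁻¹ * h⁻¹))
    (hva : ¬ IsVirtuallyAbelian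
      (Subgroup.closure ({g, h} : Set (Matrix.SpecialLinearGroup (Fin 2) ℝ)))) :
    ∃ (φ : MulAut (FreeGroup (Fin 2))) (ε δ : ℝ),
      (ε = 1 ∨ ε = -1) ∧ (δ = 1 ∨ δ = -1) ∧
      2 < ε * trSL (ρ (φ (FreeGroup.of 0))) ∧
      2 < δ * trSL (ρ (φ (FreeGroup.of 1))) ∧
      2 < ε * δ * trSL (ρ (φ (FreeGroup.of 0 * FreeGroup.of 1))) := by
  have hc : 4 < χ (g, h) := by
    have e : χ (g, h) = trSL (g*h*g⁻¹*h⁻¹) + 2 := by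
      rw [χ_pair, trSL_commutator]; ring
    rw [e]; linarith
  have hnd : ∀ q, Reach (g,h) q → 2 < |X q| → ¬(Y q = 0 ∧ Z q = 0) := by
    rintro q hr hx ⟨hy0, hz0⟩
    apply hva
    have hcl := reach_closure hr
    have hVA := va_dihedral q.1 q.2 hx hy0 hz0
    rw [hcl] at hVA
    exact hVA
  obtain ⟨q, hr, hgt⟩ := master_s11 (g,h) hc hnd
  have hpr : pr ρ (MulEquiv.refl F2) = (g, h) := by
    simp only [pr, MulEquiv.refl_apply]
    rw [← hg, ← hh]
  obtain ⟨ψ, hψ⟩ := reach_aut ρ q (by rw [hpr]; exact hr)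
  obtain ⟨ε, δ, hε, hδ, h1, h2, h3⟩ := hgt
  have e1 : ρ (ψ (FreeGroup.of 0)) = q.1 := congrArg Prod.fst hψ
  have e2 : ρ (ψ (FreeGroup.of 1)) = q.2 := congrArg Prod.snd hψ
  refine ⟨ψ, ε, δ, hε, hδ, ?_, ?_, ?_⟩
  · rw [e1]; exact h1
  · rw [e2]; exact h2
  · rw [map_mul, map_mul, e1, e2]; exact h3
end
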